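/- arXiv:2410.17034 — 9 statements merged into one kernel-verified Lean document; each statement's English description precedes it below -/
import Mathlib

section
/- Every tree T on n vertices with maximum degree Δ contains a family of at least (n-1-Δ)/40 pairwise edge-disjoint switchable pairs of edges. -/
/-- A pair of vertex-disjoint edges `uw`, `vz` of a tree `T` is *switchable* if:
(I) `w` and `z` are both leaves; or (II) `u` and `v` both have degree 2 and share
a common neighbour `c` distinct from `w` and `z`; or (III) `u` and `v` both have
degree 2 and `uv` is an edge of `T`. -/
def Switchable {V : Type*} [Fintype V] (T : SimpleGraph V) [DecidableRel T.Adj]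
    (u w v z : V) : Prop :=
  T.Adj u w ∧ T.Adj v z ∧ u ≠ v ∧ u ≠ z ∧ w ≠ v ∧ w ≠ z ∧
    ((T.degree w = 1 ∧ T.degree z = 1) ∨
     (T.degree u = 2 ∧ T.degree v = 2 ∧ ∃ c, c ≠ w ∧ c ≠ z ∧ T.Adj u c ∧ T.Adj v c) ∨
     (T.degree u = 2 ∧ T.degree v = 2 ∧ T.Adj u v))

/-- The two edges of a switchable pair, as a finset of edges. -/
def pairEdges {V : Type*} [DecidableEq V] (p : V × V × V × V) : Finset (Sym2 V) :=
  {s(p.1, p.2.1), s(p.2.2.1, p.2.2.2)}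

set_option linter.unusedVariables false
set_option linter.unusedSectionVars false

open Finset SimpleGraph

lemma greedyLemma {α β : Type*} [DecidableEq α] [DecidableEq β] (g : α → Finset β) (K : ℕ) :
    ∀ (A : Finset α), (∀ a ∈ A, (g a).Nonempty) →
      (∀ a ∈ A, (A.filter (fun b => ¬ Disjoint (g a) (g b))).card ≤ K) →
      ∃ S ⊆ A, (∀ a ∈ S, ∀ b ∈ S, a ≠ b → Disjoint (g a) (g b)) ∧ A.card ≤ K * S.card := by
  classical
  intro A
  induction A using Finset.strongInduction with
  | _ A ih =>
    intro hne hconf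
    rcases A.eq_empty_or_nonempty with rfl | ⟨a, ha⟩
    · exact ⟨∅, by simp⟩
    · set A' := A.filter (fun b => Disjoint (g a) (g b)) with hA'
      have haA' : a ∉ A' := by
        simp only [hA', mem_filter]
        rintro ⟨-, hd⟩
        exact (hne a ha).ne_empty (disjoint_self.1 hd)
      have hsub : A' ⊆ A := filter_subset _ _
      have hss : A' ⊂ A := ssubset_iff_of_subset hsub |>.2 ⟨a, ha, haA'⟩
      obtain ⟨S', hS'sub, hS'disj, hS'card⟩ := ih A' hss
        (fun b hb => hne b (hsub hb))
        (fun b hb => le_trans (card_le_card (fun c hc => by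
          simp only [mem_filter] at hc ⊢
          exact ⟨hsub hc.1, hc.2⟩)) (hconf b (hsub hb)))
      have haS' : a ∉ S' := fun h => haA' (hS'sub h)
      refine ⟨insert a S', ?_, ?_, ?_⟩
      · intro x hx
        rcases mem_insert.1 hx with rfl | hx
        · exact ha
        · exact hsub (hS'sub hx)
      · intro x hx y hy hxy
        have hd : ∀ z ∈ S', Disjoint (g a) (g z) := fun z hz => (mem_filter.1 (hS'sub hz)).2
        rcases mem_insert.1 hx with hxa | hx'
        · rcases mem_insert.1 hy with hya | hy'
          · exact absurd (hxa.trans hya.symm) hxy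
          · subst hxa; exact hd y hy'
        · rcases mem_insert.1 hy with hya | hy'
          · subst hya; exact (hd x hx').symm
          · exact hS'disj x hx' y hy' hxy
      · have hsplit : A'.card + (A.filter (fun b => ¬ Disjoint (g a) (g b))).card = A.card := by
          rw [hA']
          exact card_filter_add_card_filter_not _
        have := hconf a ha
        rw [card_insert_of_notMem haS', Nat.mul_succ]
        omega

lemma matchingLemma {α β : Type*} [DecidableEq α] [DecidableEq β] (f : α → β) (m : ℕ) :
    ∀ (s : Finset α), (∀ y, (s.filter (fun a => f a = y)).card ≤ m) →
      ∃ M : Finset (α × α),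
        (∀ p ∈ M, p.1 ∈ s ∧ p.2 ∈ s ∧ f p.1 ≠ f p.2) ∧
        (∀ p ∈ M, ∀ q ∈ M, p ≠ q → p.1 ≠ q.1 ∧ p.1 ≠ q.2 ∧ p.2 ≠ q.1 ∧ p.2 ≠ q.2) ∧
        (∀ p ∈ M, p.1 ≠ p.2) ∧ s.card ≤ 2 * M.card + m := by
  classical
  intro s
  induction s using Finset.strongInduction with
  | _ s ih =>
    intro hbound
    by_cases hconst : ∀ a ∈ s, ∀ b ∈ s, f a = f b
    · refine ⟨∅, by simp, by simp, by simp, ?_⟩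
      rcases s.eq_empty_or_nonempty with rfl | ⟨a, ha⟩
      · simp
      · have : s ⊆ s.filter (fun x => f x = f a) := fun x hx => mem_filter.2 ⟨hx, hconst x hx a ha⟩
        calc s.card ≤ _ := card_le_card this
          _ ≤ m := hbound (f a)
          _ ≤ 2 * 0 + m := by omega
    · push_neg at hconst
      obtain ⟨a, ha, b, hb, hab⟩ := hconst
      have hne : a ≠ b := fun h => hab (by rw [h])
      set s' := (s.erase a).erase b with hs'
      have hsub : s' ⊆ s := (erase_subset _ _).trans (erase_subset _ _)
      have hss : s' ⊂ s := by
        refine ssubset_iff_of_subset hsub |>.2 ⟨a, ha, ?_⟩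
        simp [hs', hne]
      obtain ⟨M', hM'mem, hM'disj, hM'ne, hM'card⟩ := ih s' hss
        (fun y => le_trans (card_le_card (filter_subset_filter _ hsub)) (hbound y))
      have has' : a ∉ s' := by simp [hs']
      have hbs' : b ∉ s' := by simp [hs']
      have hnotmem : (a, b) ∉ M' := fun h => has' (hM'mem _ h).1
      refine ⟨insert (a, b) M', ?_, ?_, ?_, ?_⟩
      · intro p hp
        rcases mem_insert.1 hp with rfl | hp
        · exact ⟨ha, hb, hab⟩
        · exact ⟨hsub (hM'mem p hp).1, hsub (hM'mem p hp).2.1, (hM'mem p hp).2.2⟩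
      · intro p hp q hq hpq
        have key : ∀ r ∈ M', r.1 ≠ a ∧ r.1 ≠ b ∧ r.2 ≠ a ∧ r.2 ≠ b := by
          intro r hr
          obtain ⟨h1, h2, -⟩ := hM'mem r hr
          exact ⟨fun h => has' (h ▸ h1), fun h => hbs' (h ▸ h1),
            fun h => has' (h ▸ h2), fun h => hbs' (h ▸ h2)⟩
        rcases mem_insert.1 hp with rfl | hp <;> rcases mem_insert.1 hq with rfl | hq
        · exact absurd rfl hpq
        · obtain ⟨k1, k2, k3, k4⟩ := key q hq
          exact ⟨k1.symm, k3.symm, k2.symm, k4.symm⟩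
        · exact key p hp
        · exact hM'disj p hp q hq hpq
      · intro p hp
        rcases mem_insert.1 hp with rfl | hp
        · exact hne
        · exact hM'ne p hp
      · have h1 : s'.card + 2 = s.card := by
          rw [hs', card_erase_of_mem, card_erase_of_mem ha]
          · have : 1 ≤ s.card := card_pos.2 ⟨a, ha⟩
            have : 2 ≤ s.card := by
              have := one_lt_card.2 ⟨a, ha, b, hb, hne⟩
              omega
            omega
          · simp [mem_erase, hne.symm, hb]
        rw [card_insert_of_notMem hnotmem]
        omega

section Count
variable {n : ℕ} (T : SimpleGraph (Fin n)) [DecidableRel T.Adj]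

def owf (u v : Fin n) : Fin n :=
  if h : ((T.neighborFinset u).erase v).Nonempty then ((T.neighborFinset u).erase v).min' h else u
def hubf (w : Fin n) : Fin n := owf T w w

def Wl : Finset (Fin n) := univ.filter (fun v => T.degree v = 1)
def Bf : Finset (Fin n) := univ.filter (fun v => 3 ≤ T.degree v)
def pend (v : Fin n) : ℕ := ((T.neighborFinset v).filter (fun x => T.degree x = 1)).card
def GoodF : Finset (Fin n × Fin n) :=
  univ.filter (fun p => T.Adj p.1 p.2 ∧ p.1 < p.2 ∧ T.degree p.1 = 2 ∧ T.degree p.2 = 2)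

def P1 : Finset (Sym2 (Fin n)) := T.edgeFinset.filter (fun e => ∃ a, a ∈ e ∧ T.degree a = 1)
def P2 : Finset (Sym2 (Fin n)) := T.edgeFinset.filter (fun e => ∀ a, a ∈ e → T.degree a = 2)
def P3 : Finset (Sym2 (Fin n)) := T.edgeFinset.filter
  (fun e => ¬ (∃ a, a ∈ e ∧ T.degree a = 1) ∧ ¬ (∀ a, a ∈ e → T.degree a = 2))

variable {T}

lemma edge_partition : T.edgeFinset.card = (P1 T).card + (P2 T).card + (P3 T).card := by
  classical
  have h1 := card_filter_add_card_filter_not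
    (s := T.edgeFinset) (p := fun e => ∃ a, a ∈ e ∧ T.degree a = 1)
  have h2 := card_filter_add_card_filter_not
    (s := T.edgeFinset.filter (fun e => ¬ (∃ a, a ∈ e ∧ T.degree a = 1)))
    (p := fun e => ∀ a, a ∈ e → T.degree a = 2)
  have e2 : (T.edgeFinset.filter (fun e => ¬ (∃ a, a ∈ e ∧ T.degree a = 1))).filter
      (fun e => ∀ a, a ∈ e → T.degree a = 2) = P2 T := by
    rw [filter_filter, P2]
    apply filter_congr
    intro e _
    constructor
    · exact fun h => h.2
    · intro h
      refine ⟨?_, h⟩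
      rintro ⟨a, ha, hd⟩
      rw [h a ha] at hd
      omega
  have e3 : (T.edgeFinset.filter (fun e => ¬ (∃ a, a ∈ e ∧ T.degree a = 1))).filter
      (fun e => ¬ ∀ a, a ∈ e → T.degree a = 2) = P3 T := by
    rw [filter_filter, P3]
  rw [e2, e3] at h2
  rw [show (P1 T) = T.edgeFinset.filter (fun e => ∃ a, a ∈ e ∧ T.degree a = 1) from rfl]
  omega

lemma hubf_adj' {w : Fin n} (h1 : 0 < T.degree w) : T.Adj w (hubf T w) := by
  have hne : ((T.neighborFinset w).erase w).Nonempty := by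
    rw [erase_eq_of_notMem (by simp)]
    rwa [← card_pos, card_neighborFinset_eq_degree]
  have h := min'_mem _ hne
  rw [show hubf T w = ((T.neighborFinset w).erase w).min' hne from by rw [hubf, owf, dif_pos hne]] at *
  have := mem_of_mem_erase h
  rwa [mem_neighborFinset] at this

lemma eq_hubf' {w x : Fin n} (h1 : T.degree w = 1) (hx : T.Adj w x) : x = hubf T w := by
  have hcard : (T.neighborFinset w).card = 1 := by rwa [card_neighborFinset_eq_degree]
  obtain ⟨a, ha⟩ := card_eq_one.1 hcard
  have hh := hubf_adj' (T := T) (w := w) (by omega)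
  rw [← mem_neighborFinset, ha, mem_singleton] at hx hh
  rw [hx, hh]

variable (hT : T.IsTree) (h3 : 3 ≤ n)

lemma noAdjLeaves (hT : T.IsTree) (h3 : 3 ≤ n) {w x : Fin n} (hw : T.degree w = 1)
    (hx : T.degree x = 1) : ¬ T.Adj w x := by
  intro hadj
  have hy : ∃ y : Fin n, y ≠ w ∧ y ≠ x := by
    by_contra hc
    push_neg at hc
    have hsub : (Finset.univ : Finset (Fin n)).card ≤ ({w, x} : Finset (Fin n)).card := by
      apply card_le_card
      intro y _
      rcases eq_or_ne y w with rfl | hne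
      · simp
      · simp [hc y hne]
    rw [card_univ, Fintype.card_fin] at hsub
    have h2 := card_insert_le w ({x} : Finset (Fin n))
    simp at h2
    omega
  obtain ⟨y, hyw, hyx⟩ := hy
  have key : ∀ (a b : Fin n), T.Walk a b → (a = w ∨ a = x) → (b = w ∨ b = x) := by
    intro a b p
    induction p with
    | nil => exact fun h => h
    | cons h q ih =>
      intro hc
      apply ih
      rcases hc with rfl | rfl
      · right; rw [eq_hubf' hw h, ← eq_hubf' hw hadj]
      · left; rw [eq_hubf' hx h, ← eq_hubf' hx hadj.symm]
  obtain ⟨p⟩ := hT.isConnected.1 w y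
  rcases key w y p (Or.inl rfl) with h | h
  · exact hyw h
  · exact hyx h

lemma cardP1 (hT : T.IsTree) (h3 : 3 ≤ n) (hpos : ∀ v : Fin n, 0 < T.degree v) :
    (P1 T).card = (Wl T).card := by
  classical
  symm
  apply card_bij (fun w _ => s(w, hubf T w))
  · intro w hw
    rw [Wl, mem_filter] at hw
    rw [P1, mem_filter]
    refine ⟨by rw [mem_edgeFinset, mem_edgeSet]; exact hubf_adj' (by omega), w, ?_, hw.2⟩
    simp
  · intro w hw w' hw' heq
    rw [Wl, mem_filter] at hw hw'
    rw [Sym2.eq_iff] at heq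
    rcases heq with ⟨h1, -⟩ | ⟨h1, h2⟩
    · exact h1
    · exfalso
      have hadj : T.Adj w w' := by
        rw [h1] at *
        exact (hubf_adj' (T := T) (w := w') (by omega)).symm
      exact noAdjLeaves hT h3 hw.2 hw'.2 hadj
  · intro e he
    rw [P1, mem_filter] at he
    obtain ⟨hee, a, hae, hdeg⟩ := he
    rw [mem_edgeFinset] at hee
    induction e using Sym2.inductionOn with
    | hf x y =>
      rw [mem_edgeSet] at hee
      rw [Sym2.mem_iff] at hae
      rcases hae with h | h
      · refine ⟨a, by rw [Wl, mem_filter]; exact ⟨mem_univ _, hdeg⟩, ?_⟩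
        rw [Sym2.eq_iff]
        have hay : T.Adj a y := by rw [h]; exact hee
        exact Or.inl ⟨h, (eq_hubf' hdeg hay).symm⟩
      · refine ⟨a, by rw [Wl, mem_filter]; exact ⟨mem_univ _, hdeg⟩, ?_⟩
        rw [Sym2.eq_iff]
        have hax : T.Adj a x := by rw [h]; exact hee.symm
        exact Or.inr ⟨h, (eq_hubf' hdeg hax).symm⟩

lemma cardP2 : (P2 T).card = (GoodF T).card := by
  classical
  symm
  apply card_bij (fun p _ => s(p.1, p.2))
  · intro p hp
    rw [GoodF, mem_filter] at hp
    obtain ⟨-, hadj, -, h1, h2⟩ := hp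
    rw [P2, mem_filter]
    refine ⟨by rwa [mem_edgeFinset, mem_edgeSet], ?_⟩
    intro a ha
    rw [Sym2.mem_iff] at ha
    rcases ha with rfl | rfl <;> assumption
  · intro p hp q hq heq
    rw [GoodF, mem_filter] at hp hq
    rw [Sym2.eq_iff] at heq
    rcases heq with ⟨h1, h2⟩ | ⟨h1, h2⟩
    · exact Prod.ext h1 h2
    · exfalso
      have := hp.2.2.1
      have := hq.2.2.1
      omega
  · intro e he
    rw [P2, mem_filter] at he
    obtain ⟨hee, hall⟩ := he
    rw [mem_edgeFinset] at hee
    induction e using Sym2.inductionOn with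
    | hf x y =>
      rw [mem_edgeSet] at hee
      have hx : T.degree x = 2 := hall x (by simp)
      have hy : T.degree y = 2 := hall y (by simp)
      have hne : x ≠ y := hee.ne
      rcases lt_or_gt_of_ne hne with h | h
      · exact ⟨(x, y), by rw [GoodF, mem_filter]; exact ⟨mem_univ _, hee, h, hx, hy⟩, rfl⟩
      · exact ⟨(y, x), by rw [GoodF, mem_filter]; exact ⟨mem_univ _, hee.symm, h, hy, hx⟩,
          Sym2.eq_swap⟩

lemma cardP3 (hpos : ∀ v : Fin n, 0 < T.degree v) :
    (P3 T).card + ∑ v ∈ Bf T, pend T v ≤ ∑ v ∈ Bf T, T.degree v := by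
  classical
  have hsub : P3 T ⊆ (Bf T).biUnion
      (fun v => ((T.neighborFinset v).filter (fun x => T.degree x ≠ 1)).image (fun x => s(v, x))) := by
    intro e he
    rw [P3, mem_filter] at he
    obtain ⟨hee, hnp, hng⟩ := he
    rw [mem_edgeFinset] at hee
    rw [mem_biUnion]
    induction e using Sym2.inductionOn with
    | hf x y =>
      rw [mem_edgeSet] at hee
      push_neg at hnp hng
      obtain ⟨a, ha, hda⟩ := hng
      have ha3 : 3 ≤ T.degree a := by
        have h1 := hnp a ha
        have h2 := hpos a
        omega
      rw [Sym2.mem_iff] at ha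
      rcases ha with rfl | rfl
      · refine ⟨a, by rw [Bf, mem_filter]; exact ⟨mem_univ _, ha3⟩, mem_image.2
          ⟨y, mem_filter.2 ⟨by rw [mem_neighborFinset]; exact hee, hnp y (by simp)⟩, rfl⟩⟩
      · refine ⟨a, by rw [Bf, mem_filter]; exact ⟨mem_univ _, ha3⟩, mem_image.2
          ⟨x, mem_filter.2 ⟨by rw [mem_neighborFinset]; exact hee.symm, hnp x (by simp)⟩,
            Sym2.eq_swap⟩⟩
  have h1 : (P3 T).card ≤ ∑ v ∈ Bf T,
      (((T.neighborFinset v).filter (fun x => T.degree x ≠ 1)).image (fun x => s(v, x))).card :=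
    (card_le_card hsub).trans (card_biUnion_le)
  have h2 : ∀ v ∈ Bf T,
      (((T.neighborFinset v).filter (fun x => T.degree x ≠ 1)).image (fun x => s(v, x))).card
        ≤ T.degree v - pend T v := by
    intro v _
    refine card_image_le.trans ?_
    have h3 := card_filter_add_card_filter_not
      (s := T.neighborFinset v) (p := fun x => T.degree x = 1)
    rw [card_neighborFinset_eq_degree] at h3
    have : pend T v = ((T.neighborFinset v).filter (fun x => T.degree x = 1)).card := rfl
    have he : ((T.neighborFinset v).filter (fun x => ¬ T.degree x = 1)) =
        ((T.neighborFinset v).filter (fun x => T.degree x ≠ 1)) := by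
      apply filter_congr; intro x _; rfl
    rw [he] at h3
    omega
  have h4 : ∀ v ∈ Bf T, pend T v ≤ T.degree v := by
    intro v _
    have : pend T v ≤ (T.neighborFinset v).card := card_filter_le _ _
    rwa [card_neighborFinset_eq_degree] at this
  calc (P3 T).card + ∑ v ∈ Bf T, pend T v
      ≤ (∑ v ∈ Bf T, (T.degree v - pend T v)) + ∑ v ∈ Bf T, pend T v := by
        exact Nat.add_le_add (h1.trans (sum_le_sum h2)) le_rfl
    _ = ∑ v ∈ Bf T, ((T.degree v - pend T v) + pend T v) := by rw [sum_add_distrib]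
    _ = ∑ v ∈ Bf T, T.degree v := by
        apply sum_congr rfl
        intro v hv
        have := h4 v hv
        omega

lemma sum_pend : ∑ v : Fin n, pend T v = (Wl T).card := by
  classical
  have h1 : ∀ v : Fin n, pend T v = ∑ w : Fin n, if (T.degree w = 1 ∧ T.Adj v w) then 1 else 0 := by
    intro v
    rw [show pend T v = ((T.neighborFinset v).filter fun x => T.degree x = 1).card from rfl]
    rw [neighborFinset_eq_filter, filter_filter, card_filter]
    exact sum_congr rfl (fun w _ => if_congr and_comm rfl rfl)
  rw [sum_congr rfl (fun v (_ : v ∈ univ) => h1 v), sum_comm]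
  have h2 : ∀ w : Fin n,
      (∑ v : Fin n, if (T.degree w = 1 ∧ T.Adj v w) then 1 else 0) =
        if T.degree w = 1 then 1 else 0 := by
    intro w
    by_cases hd : T.degree w = 1
    · simp only [hd, true_and, if_true]
      rw [← card_filter]
      have : (univ.filter (fun v => T.Adj v w)) = T.neighborFinset w := by
        ext v
        simp [mem_neighborFinset, adj_comm]
      rw [this, card_neighborFinset_eq_degree, hd]
    · simp [hd]
  rw [sum_congr rfl (fun w (_ : w ∈ univ) => h2 w), ← card_filter]
  rfl

lemma vertex_partition (hpos : ∀ v : Fin n, 0 < T.degree v) :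
    (Wl T).card + (univ.filter (fun v => T.degree v = 2)).card + (Bf T).card = n := by
  classical
  have h1 := card_filter_add_card_filter_not
    (s := (univ : Finset (Fin n))) (p := fun v => T.degree v = 1)
  have h2 := card_filter_add_card_filter_not
    (s := univ.filter (fun v => ¬ T.degree v = 1)) (p := fun v => T.degree v = 2)
  rw [filter_filter, filter_filter] at h2
  have e1 : univ.filter (fun v => ¬ T.degree v = 1 ∧ T.degree v = 2) =
      univ.filter (fun v => T.degree v = 2) := by
    apply filter_congr; intro v _; constructor
    · exact fun h => h.2
    · exact fun h => ⟨by omega, h⟩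
  have e2 : univ.filter (fun v => ¬ T.degree v = 1 ∧ ¬ T.degree v = 2) = Bf T := by
    rw [show Bf T = univ.filter (fun v => 3 ≤ T.degree v) from rfl]
    apply filter_congr; intro v _
    have := hpos v
    constructor
    · intro h; omega
    · intro h; omega
  rw [e1, e2] at h2
  rw [card_univ, Fintype.card_fin] at h1
  rw [show (Wl T) = univ.filter (fun v => T.degree v = 1) from rfl]
  omega

lemma deg_sum_split :
    ∑ v : Fin n, T.degree v =
      (Wl T).card + 2 * (univ.filter (fun v => T.degree v = 2)).card + ∑ v ∈ Bf T, T.degree v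
      + (∑ v ∈ univ.filter (fun v => ¬ T.degree v = 1 ∧ ¬ T.degree v = 2 ∧ ¬ 3 ≤ T.degree v),
          T.degree v) := by
  classical
  rw [← sum_filter_add_sum_filter_not (univ : Finset (Fin n)) (fun v => T.degree v = 1)]
  rw [← sum_filter_add_sum_filter_not (univ.filter (fun v => ¬ T.degree v = 1))
    (fun v => T.degree v = 2)]
  rw [← sum_filter_add_sum_filter_not ((univ.filter (fun v => ¬ T.degree v = 1)).filter
    (fun v => ¬ T.degree v = 2)) (fun v => 3 ≤ T.degree v)]
  have hW : ∑ v ∈ univ.filter (fun v => T.degree v = 1), T.degree v = (Wl T).card := by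
    rw [show (Wl T) = univ.filter (fun v => T.degree v = 1) from rfl]
    calc ∑ v ∈ univ.filter (fun v => T.degree v = 1), T.degree v
        = ∑ _v ∈ univ.filter (fun v => T.degree v = 1), 1 :=
          sum_congr rfl (fun v hv => (mem_filter.1 hv).2)
      _ = _ := by simp
  have hD : ∑ v ∈ (univ.filter (fun v => ¬ T.degree v = 1)).filter (fun v => T.degree v = 2),
      T.degree v = 2 * (univ.filter (fun v => T.degree v = 2)).card := by
    rw [filter_filter]
    have e1 : univ.filter (fun v => ¬ T.degree v = 1 ∧ T.degree v = 2) =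
        univ.filter (fun v => T.degree v = 2) := by
      apply filter_congr; intro v _; constructor
      · exact fun h => h.2
      · exact fun h => ⟨by omega, h⟩
    rw [e1]
    calc ∑ v ∈ univ.filter (fun v => T.degree v = 2), T.degree v
        = ∑ _v ∈ univ.filter (fun v => T.degree v = 2), 2 :=
          sum_congr rfl (fun v hv => (mem_filter.1 hv).2)
      _ = _ := by rw [sum_const, smul_eq_mul, mul_comm]
  have hB : ((univ.filter (fun v => ¬ T.degree v = 1)).filter (fun v => ¬ T.degree v = 2)).filter
      (fun v => 3 ≤ T.degree v) = Bf T := by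
    rw [filter_filter, filter_filter]
    rw [show Bf T = univ.filter (fun v => 3 ≤ T.degree v) from rfl]
    apply filter_congr; intro v _; constructor
    · exact fun h => h.2.2
    · intro h; omega
  have hR : ((univ.filter (fun v => ¬ T.degree v = 1)).filter (fun v => ¬ T.degree v = 2)).filter
      (fun v => ¬ 3 ≤ T.degree v) =
      univ.filter (fun v => ¬ T.degree v = 1 ∧ ¬ T.degree v = 2 ∧ ¬ 3 ≤ T.degree v) := by
    rw [filter_filter, filter_filter]
  rw [hW, hD, hB, hR]
  omega

lemma master (hT : T.IsTree) (h3 : 3 ≤ n) (hpos : ∀ v : Fin n, 0 < T.degree v)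
    (ustar : Fin n) (hstar : ∀ v : Fin n, pend T v ≤ pend T ustar) :
    n + 3 * pend T ustar ≤ 4 * (Wl T).card + (GoodF T).card + 1 := by
  classical
  have hEc : T.edgeFinset.card + 1 = n := by
    have := hT.card_edgeFinset
    rwa [Fintype.card_fin] at this
  have hpart := edge_partition (T := T)
  have h1 := cardP1 hT h3 hpos
  have h2 := cardP2 (T := T)
  have h4 := cardP3 (T := T) hpos
  have hsum := deg_sum_split (T := T)
  have hRempty : univ.filter (fun v => ¬ T.degree v = 1 ∧ ¬ T.degree v = 2 ∧ ¬ 3 ≤ T.degree v)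
      = ∅ := by
    apply filter_false_of_mem
    intro v _
    have := hpos v
    intro h
    omega
  rw [hRempty, sum_empty] at hsum
  have hhs : ∑ v : Fin n, T.degree v = 2 * T.edgeFinset.card :=
    T.sum_degrees_eq_twice_card_edges
  have hvp := vertex_partition (T := T) hpos
  have h7 : 3 * (Bf T).card ≤ ∑ v ∈ Bf T, T.degree v :=
    calc 3 * (Bf T).card = ∑ _v ∈ Bf T, 3 := by rw [sum_const, smul_eq_mul, mul_comm]
      _ ≤ ∑ v ∈ Bf T, T.degree v := sum_le_sum (fun v hv => (mem_filter.1 hv).2)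
  have hpd : pend T ustar ≤ T.degree ustar := by
    have : pend T ustar ≤ (T.neighborFinset ustar).card := card_filter_le _ _
    rwa [card_neighborFinset_eq_degree] at this
  by_cases hcase : 3 ≤ T.degree ustar
  · have hmem : ustar ∈ Bf T := mem_filter.2 ⟨mem_univ _, hcase⟩
    have ha2 : T.degree ustar + 3 * ((Bf T).card - 1) ≤ ∑ v ∈ Bf T, T.degree v := by
      rw [← Finset.add_sum_erase _ _ hmem]
      apply Nat.add_le_add le_rfl
      have hce : ((Bf T).erase ustar).card = (Bf T).card - 1 := card_erase_of_mem hmem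
      rw [← hce]
      calc 3 * ((Bf T).erase ustar).card = ∑ _v ∈ (Bf T).erase ustar, 3 := by
            rw [sum_const, smul_eq_mul, mul_comm]
        _ ≤ ∑ v ∈ (Bf T).erase ustar, T.degree v :=
            sum_le_sum (fun v hv => (mem_filter.1 (mem_of_mem_erase hv)).2)
    have ha3 : 1 ≤ (Bf T).card := card_pos.2 ⟨ustar, hmem⟩
    have ha4 : pend T ustar ≤ ∑ v ∈ Bf T, pend T v :=
      single_le_sum (fun v _ => Nat.zero_le _) hmem
    omega
  · have hb2 : pend T ustar ≤ 2 := by omega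
    omega

lemma owf_spec {u v : Fin n} (h : ((T.neighborFinset u).erase v).Nonempty) :
    owf T u v ∈ (T.neighborFinset u).erase v := by
  rw [owf, dif_pos h]; exact min'_mem _ h

lemma erase_nonempty_of_deg2 {u v : Fin n} (h2 : T.degree u = 2) (hadj : T.Adj u v) :
    ((T.neighborFinset u).erase v).Nonempty := by
  rw [← card_pos, card_erase_of_mem (by rwa [mem_neighborFinset])]
  rw [← card_neighborFinset_eq_degree] at h2; omega

lemma owf_adj {u v : Fin n} (h2 : T.degree u = 2) (hadj : T.Adj u v) : T.Adj u (owf T u v) := by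
  have := owf_spec (erase_nonempty_of_deg2 h2 hadj)
  rw [mem_erase, mem_neighborFinset] at this; exact this.2

lemma owf_ne {u v : Fin n} (h2 : T.degree u = 2) (hadj : T.Adj u v) : owf T u v ≠ v := by
  have := owf_spec (erase_nonempty_of_deg2 h2 hadj)
  rw [mem_erase] at this; exact this.1

lemma eq_owf {u v x : Fin n} (h2 : T.degree u = 2) (hadj : T.Adj u v) (hx : T.Adj u x)
    (hxv : x ≠ v) : x = owf T u v := by
  have hcard : ((T.neighborFinset u).erase v).card = 1 := by
    rw [card_erase_of_mem (by rwa [mem_neighborFinset]), card_neighborFinset_eq_degree, h2]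
  obtain ⟨a, ha⟩ := card_eq_one.1 hcard
  have h1 : x ∈ (T.neighborFinset u).erase v := by
    rw [mem_erase, mem_neighborFinset]; exact ⟨hxv, hx⟩
  have h2' : owf T u v ∈ (T.neighborFinset u).erase v := owf_spec (by rw [ha]; simp)
  rw [ha, mem_singleton] at h1 h2'
  rw [h1, h2']



lemma deg_pos (hT : T.IsTree) (h2 : 2 ≤ n) : ∀ v : Fin n, 0 < T.degree v := by
  intro v
  obtain ⟨u, hu⟩ := Fintype.exists_ne_of_one_lt_card (by simp; omega) v
  obtain ⟨p⟩ := hT.isConnected.1 v u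
  cases p with
  | nil => exact absurd rfl hu.symm
  | cons h q => exact (T.degree_pos_iff_exists_adj _).2 ⟨_, h⟩

lemma no_triangle (hT : T.IsTree) {a b c : Fin n} (hab : T.Adj a b) (hbc : T.Adj b c)
    (hac : T.Adj a c) : False := by
  have hp1 : (SimpleGraph.Walk.cons hac SimpleGraph.Walk.nil).IsPath := by
    simp [SimpleGraph.Walk.isPath_def, hac.ne]
  have hp2 : (SimpleGraph.Walk.cons hab (SimpleGraph.Walk.cons hbc SimpleGraph.Walk.nil)).IsPath := by
    simp [SimpleGraph.Walk.isPath_def, hab.ne, hbc.ne, hac.ne]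
  have := (hT.existsUnique_path a c).unique hp1 hp2
  simpa using congrArg SimpleGraph.Walk.length this

end Count

section PartD
variable {n : ℕ} {T : SimpleGraph (Fin n)} [DecidableRel T.Adj]

variable (T) in
def tupIII (p : Fin n × Fin n) : Fin n × Fin n × Fin n × Fin n :=
  (p.1, owf T p.1 p.2, p.2, owf T p.2 p.1)

variable (T) in
def OE (p : Fin n × Fin n) : Finset (Sym2 (Fin n)) := pairEdges (tupIII T p)

lemma OE_eq (p : Fin n × Fin n) :
    OE T p = {s(p.1, owf T p.1 p.2), s(p.2, owf T p.2 p.1)} := rfl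

lemma mem_goodF {p : Fin n × Fin n} (hp : p ∈ GoodF T) :
    T.Adj p.1 p.2 ∧ p.1 < p.2 ∧ T.degree p.1 = 2 ∧ T.degree p.2 = 2 :=
  (mem_filter.1 hp).2

lemma candidate_determined {u' v' a b : Fin n} (h2 : T.degree u' = 2) (hv2 : T.degree v' = 2)
    (hadj : T.Adj u' v') (heq : s(u', owf T u' v') = s(a, b)) :
    (u' = a ∧ v' = owf T a b) ∨ (u' = b ∧ v' = owf T b a) := by
  rw [Sym2.eq_iff] at heq
  rcases heq with ⟨h1, hb⟩ | ⟨h1, hb⟩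
  · left
    subst h1
    refine ⟨rfl, ?_⟩
    have hAb : T.Adj u' b := by rw [← hb]; exact owf_adj h2 hadj
    have hvb : v' ≠ b := by rw [← hb]; exact fun h => (owf_ne h2 hadj) h.symm
    exact eq_owf h2 hAb hadj hvb
  · right
    subst h1
    refine ⟨rfl, ?_⟩
    have hAa : T.Adj u' a := by rw [← hb]; exact owf_adj h2 hadj
    have hva : v' ≠ a := by rw [← hb]; exact fun h => (owf_ne h2 hadj) h.symm
    exact eq_owf h2 hAa hadj hva

lemma conflict_bound {p : Fin n × Fin n} (hp : p ∈ GoodF T) :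
    ((GoodF T).filter (fun q => ¬ Disjoint (OE T p) (OE T q))).card ≤ 6 := by
  classical
  obtain ⟨hadj, hlt, hu2, hv2⟩ := mem_goodF hp
  set u := p.1
  set v := p.2
  set w := owf T u v with hw
  set z := owf T v u with hz
  have hvw : v = owf T u w := by
    have hAw : T.Adj u w := owf_adj hu2 hadj
    exact eq_owf hu2 hAw hadj (fun h => (owf_ne hu2 hadj) h.symm)
  have huz : u = owf T v z := by
    have hAz : T.Adj v z := owf_adj hv2 hadj.symm
    exact eq_owf hv2 hAz hadj.symm (fun h => (owf_ne hv2 hadj.symm) h.symm)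
  have hsub : (GoodF T).filter (fun q => ¬ Disjoint (OE T p) (OE T q)) ⊆
      ({(u, v), (v, u), (w, owf T w u), (owf T w u, w), (z, owf T z v), (owf T z v, z)} :
        Finset (Fin n × Fin n)) := by
    intro q hq
    rw [mem_filter] at hq
    obtain ⟨hqG, hnd⟩ := hq
    obtain ⟨qadj, qlt, qu2, qv2⟩ := mem_goodF hqG
    obtain ⟨f, hf1, hf2⟩ := Finset.not_disjoint_iff.1 hnd
    rw [OE_eq] at hf1 hf2
    simp only [mem_insert, mem_singleton] at hf1 hf2
    have hqeq : (q.1 = u ∧ q.2 = v) ∨ (q.1 = v ∧ q.2 = u) ∨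
        (q.1 = w ∧ q.2 = owf T w u) ∨ (q.1 = owf T w u ∧ q.2 = w) ∨
        (q.1 = z ∧ q.2 = owf T z v) ∨ (q.1 = owf T z v ∧ q.2 = z) := by
      rcases hf2 with hh | hh
      · -- f is q's first outer edge
        rcases hf1 with hg | hg
        · -- f = s(u, w)
          have := candidate_determined qu2 qv2 qadj (hh.symm.trans hg)
          rcases this with ⟨e1, e2⟩ | ⟨e1, e2⟩
          · exact Or.inl ⟨e1, by rw [e2, ← hvw]⟩
          · exact Or.inr (Or.inr (Or.inl ⟨e1, e2⟩))
        · -- f = s(v, z)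
          have := candidate_determined qu2 qv2 qadj (hh.symm.trans hg)
          rcases this with ⟨e1, e2⟩ | ⟨e1, e2⟩
          · exact Or.inr (Or.inl ⟨e1, by rw [e2, ← huz]⟩)
          · exact Or.inr (Or.inr (Or.inr (Or.inr (Or.inl ⟨e1, e2⟩))))
      · -- f is q's second outer edge
        rcases hf1 with hg | hg
        · have := candidate_determined qv2 qu2 qadj.symm (hh.symm.trans hg)
          rcases this with ⟨e1, e2⟩ | ⟨e1, e2⟩
          · exact Or.inr (Or.inl ⟨by rw [e2, ← hvw], e1⟩)
          · exact Or.inr (Or.inr (Or.inr (Or.inl ⟨e2, e1⟩)))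
        · have := candidate_determined qv2 qu2 qadj.symm (hh.symm.trans hg)
          rcases this with ⟨e1, e2⟩ | ⟨e1, e2⟩
          · exact Or.inl ⟨by rw [e2, ← huz], e1⟩
          · exact Or.inr (Or.inr (Or.inr (Or.inr (Or.inr ⟨e2, e1⟩))))
    simp only [mem_insert, mem_singleton]
    rcases hqeq with h | h | h | h | h | h
    · exact Or.inl (Prod.ext h.1 h.2)
    · exact Or.inr (Or.inl (Prod.ext h.1 h.2))
    · exact Or.inr (Or.inr (Or.inl (Prod.ext h.1 h.2)))
    · exact Or.inr (Or.inr (Or.inr (Or.inl (Prod.ext h.1 h.2))))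
    · exact Or.inr (Or.inr (Or.inr (Or.inr (Or.inl (Prod.ext h.1 h.2)))))
    · exact Or.inr (Or.inr (Or.inr (Or.inr (Or.inr (Prod.ext h.1 h.2)))))
  calc ((GoodF T).filter (fun q => ¬ Disjoint (OE T p) (OE T q))).card
      ≤ _ := card_le_card hsub
    _ ≤ 6 := by
      apply le_trans (card_insert_le _ _)
      apply Nat.succ_le_succ
      apply le_trans (card_insert_le _ _)
      apply Nat.succ_le_succ
      apply le_trans (card_insert_le _ _)
      apply Nat.succ_le_succ
      apply le_trans (card_insert_le _ _)
      apply Nat.succ_le_succ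
      apply le_trans (card_insert_le _ _)
      apply Nat.succ_le_succ
      exact card_singleton _ |>.le

end PartD

section PartE
variable {n : ℕ} {T : SimpleGraph (Fin n)} [DecidableRel T.Adj]

lemma pair_disjoint_of_ne {α : Type*} [DecidableEq α] {e1 e2 f1 f2 : α}
    (h11 : e1 ≠ f1) (h12 : e1 ≠ f2) (h21 : e2 ≠ f1) (h22 : e2 ≠ f2) :
    Disjoint ({e1, e2} : Finset α) {f1, f2} := by
  rw [Finset.disjoint_left]
  intro x hx hx'
  simp only [mem_insert, mem_singleton] at hx hx'
  rcases hx with rfl | rfl <;> rcases hx' with h | h <;> simp_all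

lemma leaf_edge_ne (hT : T.IsTree) (h3 : 3 ≤ n) (hpos : ∀ v : Fin n, 0 < T.degree v)
    {w w' : Fin n} (hw : T.degree w = 1) (hw' : T.degree w' = 1) (hne : w ≠ w') :
    s(hubf T w, w) ≠ s(hubf T w', w') := by
  intro h
  rw [Sym2.eq_iff] at h
  rcases h with ⟨h1, h2⟩ | ⟨h1, h2⟩
  · exact hne h2
  · have hadj : T.Adj w w' := by
      have h := hubf_adj' (T := T) (w := w) (show 0 < T.degree w by omega)
      rwa [h1] at h
    exact noAdjLeaves hT h3 hw hw' hadj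

lemma Wfilter_pend (hpos : ∀ v : Fin n, 0 < T.degree v) (y : Fin n) :
    ((Wl T).filter (fun w => hubf T w = y)).card = pend T y := by
  classical
  congr 1
  ext w
  rw [mem_filter, mem_filter, mem_neighborFinset]
  constructor
  · rintro ⟨hwW, hhub⟩
    have hdeg : T.degree w = 1 := (mem_filter.1 hwW).2
    have : T.Adj w (hubf T w) := hubf_adj' (by omega)
    rw [hhub] at this
    exact ⟨this.symm, hdeg⟩
  · rintro ⟨hadj, hdeg⟩
    exact ⟨mem_filter.2 ⟨mem_univ _, hdeg⟩, (eq_hubf' hdeg hadj.symm).symm⟩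

end PartE

theorem stmt3' (n Δ : ℕ) (T : SimpleGraph (Fin n)) [DecidableRel T.Adj]
    (hT : T.IsTree) (hmax : ∀ v, T.degree v ≤ Δ) :
    ∃ S : Finset (Fin n × Fin n × Fin n × Fin n),
      (∀ p ∈ S, Switchable T p.1 p.2.1 p.2.2.1 p.2.2.2) ∧
      (∀ p ∈ S, ∀ q ∈ S, p ≠ q → Disjoint (pairEdges p) (pairEdges q)) ∧
      n - 1 - Δ ≤ 40 * S.card := by
  classical
  rcases le_or_gt n (Δ + 1) with hsmall | hbig
  · exact ⟨∅, by simp, by simp, by simp; omega⟩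
  have hn1 : 1 ≤ n := by omega
  have hΔ1 : 1 ≤ Δ := by
    by_contra hcon
    push_neg at hcon
    have h0 : 0 < T.degree ⟨0, by omega⟩ := deg_pos hT (by omega) _
    have := hmax ⟨0, by omega⟩
    omega
  have h3 : 3 ≤ n := by omega
  have hpos : ∀ v : Fin n, 0 < T.degree v := deg_pos hT (by omega)
  obtain ⟨ustar, -, hstar⟩ := Finset.exists_max_image (univ : Finset (Fin n)) (pend T)
    ⟨⟨0, by omega⟩, mem_univ _⟩
  -- greedy family of type III pairs
  obtain ⟨S3, hS3sub, hS3disj, hS3card⟩ := greedyLemma (OE T) 6 (GoodF T)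
    (fun p _ => by rw [OE_eq]; exact insert_nonempty _ _)
    (fun p hp => conflict_bound hp)
  set F : Finset (Sym2 (Fin n)) := S3.biUnion (OE T) with hF
  set W' : Finset (Fin n) := (Wl T).filter (fun w => s(hubf T w, w) ∉ F) with hW'
  have hW'leaf : ∀ w ∈ W', T.degree w = 1 := fun w hw =>
    (mem_filter.1 (mem_filter.1 hw).1).2
  have hW'notF : ∀ w ∈ W', s(hubf T w, w) ∉ F := fun w hw => (mem_filter.1 hw).2
  -- card of W'
  have hFcard : F.card ≤ 2 * S3.card := by
    refine le_trans card_biUnion_le ?_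
    calc ∑ p ∈ S3, (OE T p).card ≤ ∑ _p ∈ S3, 2 := by
          apply sum_le_sum
          intro p _
          rw [OE_eq]
          exact le_trans (card_insert_le _ _) (by simp)
      _ = 2 * S3.card := by rw [sum_const, smul_eq_mul, mul_comm]
  have hWcard : (Wl T).card ≤ W'.card + 2 * S3.card := by
    have hsplit := card_filter_add_card_filter_not
      (s := Wl T) (p := fun w => s(hubf T w, w) ∉ F)
    have hneg : ((Wl T).filter (fun w => ¬ s(hubf T w, w) ∉ F)).card ≤ F.card := by
      apply card_le_card_of_injOn (fun w => s(hubf T w, w))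
      · intro w hw
        rw [mem_coe, mem_filter, not_not] at hw
        exact mem_coe.2 hw.2
      · intro w hw w' hw' heq
        by_contra hne
        exact leaf_edge_ne hT h3 hpos ((mem_filter.1 (mem_filter.1 hw).1).2)
          ((mem_filter.1 (mem_filter.1 hw').1).2) hne heq
    rw [← hW'] at hsplit
    omega
  -- matching for type I pairs
  have hbound : ∀ y, (W'.filter (fun w => hubf T w = y)).card ≤ pend T ustar := by
    intro y
    calc (W'.filter (fun w => hubf T w = y)).card
        ≤ ((Wl T).filter (fun w => hubf T w = y)).card := by
          apply card_le_card
          intro w hw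
          rw [mem_filter] at hw ⊢
          exact ⟨(mem_filter.1 hw.1).1, hw.2⟩
      _ = pend T y := Wfilter_pend hpos y
      _ ≤ pend T ustar := hstar y (mem_univ _)
  obtain ⟨M, hMmem, hMdisj, hMne, hMcard⟩ := matchingLemma (hubf T) (pend T ustar) W' hbound
  -- assemble
  set tupI : Fin n × Fin n → Fin n × Fin n × Fin n × Fin n :=
    fun p => (hubf T p.1, p.1, hubf T p.2, p.2) with htupI
  set SI := M.image tupI with hSI
  set SIII := S3.image (tupIII T) with hSIII
  have hpairI : ∀ p : Fin n × Fin n, pairEdges (tupI p) =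
      {s(hubf T p.1, p.1), s(hubf T p.2, p.2)} := fun p => rfl
  have hpairIII : ∀ p : Fin n × Fin n, pairEdges (tupIII T p) = OE T p := fun p => rfl
  -- facts about members
  have hMW' : ∀ p ∈ M, p.1 ∈ W' ∧ p.2 ∈ W' := fun p hp =>
    ⟨(hMmem p hp).1, (hMmem p hp).2.1⟩
  have hSIedges : ∀ p ∈ M, ∀ e ∈ pairEdges (tupI p), e ∉ F := by
    intro p hp e he
    rw [hpairI] at he
    simp only [mem_insert, mem_singleton] at he
    rcases he with rfl | rfl
    · exact hW'notF _ (hMW' p hp).1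
    · exact hW'notF _ (hMW' p hp).2
  have hOEF : ∀ q ∈ S3, ∀ e ∈ OE T q, e ∈ F := by
    intro q hq e he
    rw [hF, mem_biUnion]
    exact ⟨q, hq, he⟩
  have hdisjII : Disjoint SI SIII := by
    rw [Finset.disjoint_left]
    intro t htI htIII
    rw [hSI, mem_image] at htI
    rw [hSIII, mem_image] at htIII
    obtain ⟨p, hp, rfl⟩ := htI
    obtain ⟨q, hq, hqe⟩ := htIII
    have h1 : s(hubf T p.1, p.1) ∈ pairEdges (tupI p) := by
      rw [hpairI]; exact mem_insert_self _ _
    rw [← hqe] at h1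
    rw [hpairIII] at h1
    exact hSIedges p hp _ (by rw [hpairI]; exact mem_insert_self _ _) (hOEF q hq _ h1)
  have hcardSI : SI.card = M.card := by
    rw [hSI]
    apply card_image_of_injOn
    intro p _ q _ heq
    rw [htupI] at heq
    have h2 := congrArg (fun t => t.2.1) heq
    have h4 := congrArg (fun t => t.2.2.2) heq
    exact Prod.ext h2 h4
  have hcardSIII : SIII.card = S3.card := by
    rw [hSIII]
    apply card_image_of_injOn
    intro p _ q _ heq
    have h1 := congrArg (fun t => t.1) heq
    have h3 := congrArg (fun t => t.2.2.1) heq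
    exact Prod.ext h1 h3
  have hcardS : (SI ∪ SIII).card = M.card + S3.card := by
    rw [card_union_of_disjoint hdisjII, hcardSI, hcardSIII]
  refine ⟨SI ∪ SIII, ?_, ?_, ?_⟩
  · -- switchable
    intro t ht
    rcases mem_union.1 ht with htI | htIII
    · rw [hSI, mem_image] at htI
      obtain ⟨p, hp, rfl⟩ := htI
      show Switchable T (hubf T p.1) p.1 (hubf T p.2) p.2
      have hw1 : T.degree p.1 = 1 := hW'leaf _ (hMW' p hp).1
      have hz1 : T.degree p.2 = 1 := hW'leaf _ (hMW' p hp).2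
      have hadj1 : T.Adj p.1 (hubf T p.1) := hubf_adj' (by omega)
      have hadj2 : T.Adj p.2 (hubf T p.2) := hubf_adj' (by omega)
      refine ⟨hadj1.symm, hadj2.symm, (hMmem p hp).2.2, ?_, ?_, hMne p hp, Or.inl ⟨hw1, hz1⟩⟩
      · intro heq
        have : T.Adj p.1 p.2 := by rw [← heq]; exact hadj1
        exact noAdjLeaves hT h3 hw1 hz1 this
      · intro heq
        have : T.Adj p.2 p.1 := by rw [heq]; exact hadj2
        exact noAdjLeaves hT h3 hw1 hz1 this.symm
    · rw [hSIII, mem_image] at htIII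
      obtain ⟨q, hq, rfl⟩ := htIII
      show Switchable T q.1 (owf T q.1 q.2) q.2 (owf T q.2 q.1)
      obtain ⟨hadj, hlt, hu2, hv2⟩ := mem_goodF (hS3sub hq)
      have hAw : T.Adj q.1 (owf T q.1 q.2) := owf_adj hu2 hadj
      have hAz : T.Adj q.2 (owf T q.2 q.1) := owf_adj hv2 hadj.symm
      refine ⟨hAw, hAz, hadj.ne, ?_, ?_, ?_, Or.inr (Or.inr ⟨hu2, hv2, hadj⟩)⟩
      · exact fun h => (owf_ne hv2 hadj.symm) h.symm
      · exact owf_ne hu2 hadj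
      · intro heq
        have hAz' : T.Adj q.2 (owf T q.1 q.2) := by rw [heq]; exact hAz
        exact no_triangle hT hadj hAz' hAw
  · -- pairwise disjoint
    intro t ht t' ht' htt'
    rcases mem_union.1 ht with hI | hIII <;> rcases mem_union.1 ht' with hI' | hIII'
    · rw [hSI, mem_image] at hI hI'
      obtain ⟨p, hp, rfl⟩ := hI
      obtain ⟨q, hq, rfl⟩ := hI'
      have hpq : p ≠ q := fun h => htt' (by rw [h])
      obtain ⟨d1, d2, d3, d4⟩ := hMdisj p hp q hq hpq
      rw [hpairI, hpairI]
      exact pair_disjoint_of_ne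
        (leaf_edge_ne hT h3 hpos (hW'leaf _ (hMW' p hp).1) (hW'leaf _ (hMW' q hq).1) d1)
        (leaf_edge_ne hT h3 hpos (hW'leaf _ (hMW' p hp).1) (hW'leaf _ (hMW' q hq).2) d2)
        (leaf_edge_ne hT h3 hpos (hW'leaf _ (hMW' p hp).2) (hW'leaf _ (hMW' q hq).1) d3)
        (leaf_edge_ne hT h3 hpos (hW'leaf _ (hMW' p hp).2) (hW'leaf _ (hMW' q hq).2) d4)
    · rw [hSI, mem_image] at hI
      rw [hSIII, mem_image] at hIII'
      obtain ⟨p, hp, rfl⟩ := hI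
      obtain ⟨q, hq, rfl⟩ := hIII'
      rw [Finset.disjoint_left]
      intro e he he'
      rw [hpairIII] at he'
      exact hSIedges p hp e he (hOEF q hq e he')
    · rw [hSIII, mem_image] at hIII
      rw [hSI, mem_image] at hI'
      obtain ⟨p, hp, rfl⟩ := hIII
      obtain ⟨q, hq, rfl⟩ := hI'
      rw [Finset.disjoint_right]
      intro e he he'
      rw [hpairIII] at he'
      exact hSIedges q hq e he (hOEF p hp e he')
    · rw [hSIII, mem_image] at hIII hIII'
      obtain ⟨p, hp, rfl⟩ := hIII
      obtain ⟨q, hq, rfl⟩ := hIII'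
      have hpq : p ≠ q := fun h => htt' (by rw [h])
      rw [hpairIII, hpairIII]
      exact hS3disj p hp q hq hpq
  · -- counting
    have hmaster := master hT h3 hpos ustar (fun v => hstar v (mem_univ _))
    have hpd : pend T ustar ≤ T.degree ustar := by
      have : pend T ustar ≤ (T.neighborFinset ustar).card := card_filter_le _ _
      rwa [card_neighborFinset_eq_degree] at this
    have hΔ : pend T ustar ≤ Δ := le_trans hpd (hmax ustar)
    rw [hcardS]
    omega



/-- Every tree `T` on `n` vertices with maximum degree `Δ` contains a free family
(pairwise edge-disjoint collection) of at least `(n - 1 - Δ)/40` switchable pairs. -/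
theorem stmt3 (n Δ : ℕ) (T : SimpleGraph (Fin n)) [DecidableRel T.Adj]
    (hT : T.IsTree) (hmax : ∀ v, T.degree v ≤ Δ) :
    ∃ S : Finset (Fin n × Fin n × Fin n × Fin n),
      (∀ p ∈ S, Switchable T p.1 p.2.1 p.2.2.1 p.2.2.2) ∧
      (∀ p ∈ S, ∀ q ∈ S, p ≠ q → Disjoint (pairEdges p) (pairEdges q)) ∧
      n - 1 - Δ ≤ 40 * S.card := by
  exact stmt3' n Δ T hT hmax
end

section
/- For a switchable pair of edges uw, vz in a tree T (of type I, II, or III), the graph obtained from T by deleting the edges uw and vz and adding the edges uz and vw is a tree isomorphic to T. -/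
open SimpleGraph

lemma tree_of_iso {V W : Type*} {G : SimpleGraph V} {H : SimpleGraph W}
    (e : G ≃g H) (h : G.IsTree) : H.IsTree := by
  refine ⟨e.connected_iff.mp h.isConnected, ?_⟩
  intro v c hc
  exact h.IsAcyclic (c.map e.symm.toHom) (hc.map e.symm.injective)

lemma leaf_adj {V : Type*} [Fintype V] {T : SimpleGraph V} [DecidableRel T.Adj]
    {w u a : V} (hd : T.degree w = 1) (hu : T.Adj w u) (ha : T.Adj w a) : a = u :=
  Finset.card_le_one.mp (le_of_eq hd) a (by simpa using ha) u (by simpa using hu)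

lemma deg2_adj {V : Type*} [Fintype V] [DecidableEq V] {T : SimpleGraph V} [DecidableRel T.Adj]
    {u w c a : V} (hd : T.degree u = 2) (h1 : T.Adj u w) (h2 : T.Adj u c) (hwc : w ≠ c)
    (ha : T.Adj u a) : a = w ∨ a = c := by
  have hsub : ({w, c} : Finset V) ⊆ T.neighborFinset u := by
    intro x hx
    simp only [Finset.mem_insert, Finset.mem_singleton] at hx
    rcases hx with rfl | rfl <;> simpa [mem_neighborFinset]
  have : ({w, c} : Finset V) = T.neighborFinset u := by
    apply Finset.eq_of_subset_of_card_le hsub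
    rw [← degree, hd, Finset.card_insert_of_notMem (by simpa using hwc), Finset.card_singleton]
  have hmem : a ∈ ({w, c} : Finset V) := by rw [this]; simpa [mem_neighborFinset]
  simpa using hmem

lemma sym2_invol {V : Type*} {σ : Equiv.Perm V} (hinv : ∀ x, σ (σ x) = x) (e : Sym2 V) :
    Sym2.map σ (Sym2.map σ e) = e := by
  induction e using Sym2.ind with
  | _ a b => simp [hinv]

lemma sym2_ne {V : Type*} {a b c d : V} (h1 : ¬(a = c ∧ b = d)) (h2 : ¬(a = d ∧ b = c)) :
    s(a, b) ≠ s(c, d) := by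
  rw [Ne, Sym2.eq_iff]; tauto

lemma edgeset_swap {V : Type*} {T : SimpleGraph V} {σ : Equiv.Perm V} {e1 e2 : Sym2 V}
    (h1 : e1 ∈ T.edgeSet) (h2 : e2 ∈ T.edgeSet)
    (hinv : ∀ x, σ (σ x) = x)
    (hfix : ∀ e ∈ T.edgeSet, e ≠ e1 → e ≠ e2 →
      Sym2.map σ e ∈ T.edgeSet ∧ Sym2.map σ e ≠ e1 ∧ Sym2.map σ e ≠ e2) :
    (T.edgeSet \ {e1, e2}) ∪ {Sym2.map σ e1, Sym2.map σ e2} = Sym2.map σ '' T.edgeSet := by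
  ext e
  constructor
  · rintro (⟨he, hne⟩ | he)
    · simp only [Set.mem_insert_iff, Set.mem_singleton_iff, not_or] at hne
      obtain ⟨hE, -, -⟩ := hfix e he hne.1 hne.2
      exact ⟨Sym2.map σ e, hE, sym2_invol hinv e⟩
    · rcases he with rfl | he
      · exact ⟨e1, h1, rfl⟩
      · rw [Set.mem_singleton_iff] at he
        subst he
        exact ⟨e2, h2, rfl⟩
  · rintro ⟨f, hf, rfl⟩
    by_cases hf1 : f = e1
    · subst hf1; right; left; rfl
    by_cases hf2 : f = e2
    · subst hf2; right; right; rfl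
    · exact Or.inl ⟨(hfix f hf hf1 hf2).1, by
        simp only [Set.mem_insert_iff, Set.mem_singleton_iff, not_or]
        exact ⟨(hfix f hf hf1 hf2).2.1, (hfix f hf hf1 hf2).2.2⟩⟩

noncomputable def iso_fromEdgeSet {V : Type*} {T : SimpleGraph V} {σ : Equiv.Perm V}
    (hinv : ∀ x, σ (σ x) = x) :
    T ≃g SimpleGraph.fromEdgeSet (Sym2.map σ '' T.edgeSet) := by
  refine ⟨σ, ?_⟩
  intro a b
  simp only [fromEdgeSet_adj]
  constructor
  · rintro ⟨⟨f, hf, hfe⟩, hne⟩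
    have : Sym2.map σ (Sym2.map σ f) = Sym2.map σ s(σ a, σ b) := by rw [hfe]
    rw [sym2_invol hinv] at this
    simp only [Sym2.map_pair_eq, hinv] at this
    subst this
    exact hf
  · intro h
    refine ⟨⟨s(a,b), h, by simp [Sym2.map_pair_eq]⟩, fun hab => T.ne_of_adj h (σ.injective hab)⟩


/-- For a switchable pair of edges `uw`, `vz` in a tree `T`, deleting `uw` and `vz`
and adding `uz` and `vw` yields a tree isomorphic to `T`. -/
theorem stmt4 {V : Type*} [Fintype V] [DecidableEq V] (T : SimpleGraph V)
    [DecidableRel T.Adj] (hT : T.IsTree) (u w v z : V)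
    (hsw : Switchable T u w v z) :
    (SimpleGraph.fromEdgeSet
        ((T.edgeSet \ {s(u, w), s(v, z)}) ∪ {s(u, z), s(v, w)})).IsTree ∧
    Nonempty
      (T ≃g SimpleGraph.fromEdgeSet
        ((T.edgeSet \ {s(u, w), s(v, z)}) ∪ {s(u, z), s(v, w)})) := by
  obtain ⟨huw, hvz, huv, huz, hwv, hwz, hcase⟩ := hsw
  have huw' : u ≠ w := huw.ne
  have hvz' : v ≠ z := hvz.ne
  obtain ⟨σ, hinv, hpair, hfix⟩ :
      ∃ σ : Equiv.Perm V, (∀ x, σ (σ x) = x) ∧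
        ({Sym2.map σ s(u, w), Sym2.map σ s(v, z)} : Set (Sym2 V)) = {s(u, z), s(v, w)} ∧
        ∀ e ∈ T.edgeSet, e ≠ s(u, w) → e ≠ s(v, z) →
          Sym2.map σ e ∈ T.edgeSet ∧ Sym2.map σ e ≠ s(u, w) ∧ Sym2.map σ e ≠ s(v, z) := by
    rcases hcase with ⟨hdw, hdz⟩ | ⟨hdu, hdv, c, hcw, hcz, huc, hvc⟩ | ⟨hdu, hdv, huv'⟩
    · -- Type I : swap the two leaves w and z
      refine ⟨Equiv.swap w z, fun x => Equiv.swap_apply_self _ _ _, ?_, ?_⟩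
      · rw [Sym2.map_pair_eq, Sym2.map_pair_eq,
          Equiv.swap_apply_of_ne_of_ne huw' huz, Equiv.swap_apply_left,
          Equiv.swap_apply_of_ne_of_ne (Ne.symm hwv) hvz', Equiv.swap_apply_right]
      · intro e he hne1 hne2
        induction e using Sym2.ind with
        | _ a b =>
        rw [SimpleGraph.mem_edgeSet] at he
        have haw : a ≠ w := by
          rintro rfl
          exact hne1 (by rw [leaf_adj hdw huw.symm he]; exact Sym2.eq_swap)
        have haz : a ≠ z := by
          rintro rfl
          exact hne2 (by rw [leaf_adj hdz hvz.symm he]; exact Sym2.eq_swap)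
        have hbw : b ≠ w := by
          rintro rfl
          exact hne1 (by rw [leaf_adj hdw huw.symm he.symm])
        have hbz : b ≠ z := by
          rintro rfl
          exact hne2 (by rw [leaf_adj hdz hvz.symm he.symm])
        rw [Sym2.map_pair_eq, Equiv.swap_apply_of_ne_of_ne haw haz,
          Equiv.swap_apply_of_ne_of_ne hbw hbz]
        exact ⟨T.mem_edgeSet.mpr he, hne1, hne2⟩
    · -- Type II : swap u and v (common neighbour c)
      have huc' : u ≠ c := huc.ne
      have hvc' : v ≠ c := hvc.ne
      have nu : ∀ a, T.Adj u a → a = w ∨ a = c := fun a ha =>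
        deg2_adj hdu huw huc (Ne.symm hcw) ha
      have nv : ∀ a, T.Adj v a → a = z ∨ a = c := fun a ha =>
        deg2_adj hdv hvz hvc (Ne.symm hcz) ha
      refine ⟨Equiv.swap u v, fun x => Equiv.swap_apply_self _ _ _, ?_, ?_⟩
      · rw [Sym2.map_pair_eq, Sym2.map_pair_eq, Equiv.swap_apply_left, Equiv.swap_apply_right,
          Equiv.swap_apply_of_ne_of_ne (Ne.symm huw') hwv,
          Equiv.swap_apply_of_ne_of_ne (Ne.symm huz) (Ne.symm hvz')]
        exact Set.pair_comm _ _
      · intro e he hne1 hne2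
        induction e using Sym2.ind with
        | _ a b =>
        rw [SimpleGraph.mem_edgeSet] at he
        by_cases hau : a = u
        · subst hau
          rcases nu b he with rfl | rfl
          · exact absurd rfl hne1
          · rw [Sym2.map_pair_eq, Equiv.swap_apply_left,
              Equiv.swap_apply_of_ne_of_ne (Ne.symm huc') (Ne.symm hvc')]
            exact ⟨T.mem_edgeSet.mpr hvc,
              sym2_ne (fun h => huv h.1.symm) (fun h => hwv h.1.symm),
              sym2_ne (fun h => hcz h.2) (fun h => hvz' h.1)⟩
        by_cases hav : a = v
        · subst hav
          rcases nv b he with rfl | rfl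
          · exact absurd rfl hne2
          · rw [Sym2.map_pair_eq, Equiv.swap_apply_right,
              Equiv.swap_apply_of_ne_of_ne (Ne.symm huc') (Ne.symm hvc')]
            exact ⟨T.mem_edgeSet.mpr huc,
              sym2_ne (fun h => hcw h.2) (fun h => huw' h.1),
              sym2_ne (fun h => huv h.1) (fun h => huz h.1)⟩
        by_cases hbu : b = u
        · subst hbu
          rcases nu a he.symm with rfl | rfl
          · exact absurd Sym2.eq_swap hne1
          · rw [Sym2.map_pair_eq, Equiv.swap_apply_left,
              Equiv.swap_apply_of_ne_of_ne (Ne.symm huc') (Ne.symm hvc')]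
            exact ⟨T.mem_edgeSet.mpr hvc.symm,
              sym2_ne (fun h => huc' h.1.symm) (fun h => hcw h.1),
              sym2_ne (fun h => hvc' h.1.symm) (fun h => hcz h.1)⟩
        by_cases hbv : b = v
        · subst hbv
          rcases nv a he.symm with rfl | rfl
          · exact absurd Sym2.eq_swap hne2
          · rw [Sym2.map_pair_eq, Equiv.swap_apply_right,
              Equiv.swap_apply_of_ne_of_ne (Ne.symm huc') (Ne.symm hvc')]
            exact ⟨T.mem_edgeSet.mpr huc.symm,
              sym2_ne (fun h => huw' h.2) (fun h => hcw h.1),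
              sym2_ne (fun h => huz h.2) (fun h => huv h.2)⟩
        · rw [Sym2.map_pair_eq, Equiv.swap_apply_of_ne_of_ne hau hav,
            Equiv.swap_apply_of_ne_of_ne hbu hbv]
          exact ⟨T.mem_edgeSet.mpr he, hne1, hne2⟩
    · -- Type III : swap u and v (uv an edge)
      have nu : ∀ a, T.Adj u a → a = w ∨ a = v := fun a ha =>
        deg2_adj hdu huw huv' hwv ha
      have nv : ∀ a, T.Adj v a → a = z ∨ a = u := fun a ha =>
        deg2_adj hdv hvz huv'.symm (Ne.symm huz) ha
      refine ⟨Equiv.swap u v, fun x => Equiv.swap_apply_self _ _ _, ?_, ?_⟩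
      · rw [Sym2.map_pair_eq, Sym2.map_pair_eq, Equiv.swap_apply_left, Equiv.swap_apply_right,
          Equiv.swap_apply_of_ne_of_ne (Ne.symm huw') hwv,
          Equiv.swap_apply_of_ne_of_ne (Ne.symm huz) (Ne.symm hvz')]
        exact Set.pair_comm _ _
      · intro e he hne1 hne2
        induction e using Sym2.ind with
        | _ a b =>
        rw [SimpleGraph.mem_edgeSet] at he
        by_cases hau : a = u
        · subst hau
          rcases nu b he with rfl | rfl
          · exact absurd rfl hne1
          · rw [Sym2.map_pair_eq, Equiv.swap_apply_left, Equiv.swap_apply_right]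
            exact ⟨T.mem_edgeSet.mpr huv'.symm,
              sym2_ne (fun h => huv h.1.symm) (fun h => hwv h.1.symm),
              sym2_ne (fun h => huz h.2) (fun h => hvz' h.1)⟩
        by_cases hav : a = v
        · subst hav
          rcases nv b he with rfl | rfl
          · exact absurd rfl hne2
          · rw [Sym2.map_pair_eq, Equiv.swap_apply_right, Equiv.swap_apply_left]
            exact ⟨T.mem_edgeSet.mpr huv',
              sym2_ne (fun h => hwv h.2.symm) (fun h => huw' h.1),
              sym2_ne (fun h => huv h.1) (fun h => huz h.1)⟩
        by_cases hbu : b = u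
        · subst hbu
          rcases nu a he.symm with rfl | rfl
          · exact absurd Sym2.eq_swap hne1
          · exact absurd rfl hav
        by_cases hbv : b = v
        · subst hbv
          rcases nv a he.symm with rfl | rfl
          · exact absurd Sym2.eq_swap hne2
          · exact absurd rfl hau
        · rw [Sym2.map_pair_eq, Equiv.swap_apply_of_ne_of_ne hau hav,
            Equiv.swap_apply_of_ne_of_ne hbu hbv]
          exact ⟨T.mem_edgeSet.mpr he, hne1, hne2⟩
  have key : (T.edgeSet \ {s(u, w), s(v, z)}) ∪ {s(u, z), s(v, w)}
      = Sym2.map σ '' T.edgeSet := by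
    rw [← hpair]
    exact edgeset_swap (T.mem_edgeSet.mpr huw) (T.mem_edgeSet.mpr hvz) hinv hfix
  rw [key]
  exact ⟨tree_of_iso (iso_fromEdgeSet hinv) hT, ⟨iso_fromEdgeSet hinv⟩⟩
end

section
/- Let n = 4m+6 and partition the vertices of K_n into V_1 of size 2m+1 and V_2 of size 2m+5. Colour edges between V_1 and V_2 red (-1) and all other edges blue (+1). Then, for every Hamilton cycle H of K_n, the sum of edge colours of H is congruent to 2 modulo 4. -/
/-- Product of `g u * g v` over the edges of a walk equals `g a * g b`,
provided `g` is an involution under multiplication. -/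
lemma walk_edge_prod {V : Type*} {G : SimpleGraph V} (g : V → ℤ)
    (hg : ∀ v, g v * g v = 1) :
    ∀ {a b : V} (p : G.Walk a b),
      (p.edges.map (Sym2.lift ⟨fun u v => g u * g v, fun u v => mul_comm _ _⟩)).prod
        = g a * g b := by
  intro a b p
  induction p with
  | nil => simpa using (hg _).symm
  | @cons u v w h p ih =>
      simp only [SimpleGraph.Walk.edges_cons, List.map_cons, List.prod_cons, ih,
        Sym2.lift_mk]
      rw [show g u * g v * (g v * g w) = g u * ((g v * g v) * g w) by ring, hg v,
        one_mul]

lemma pm_one_sum_mod (l : List ℤ) (h : ∀ x ∈ l, x = 1 ∨ x = -1) :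
    (l.prod = 1 ∧ l.sum % 4 = (l.length : ℤ) % 4) ∨
    (l.prod = -1 ∧ l.sum % 4 = ((l.length : ℤ) + 2) % 4) := by
  induction l with
  | nil => left; simp
  | cons x t ih =>
      have hx := h x (by simp)
      have ih' := ih (fun y hy => h y (by simp [hy]))
      simp only [List.prod_cons, List.sum_cons, List.length_cons]
      rcases hx with hx | hx <;> rcases ih' with ⟨hp, hs⟩ | ⟨hp, hs⟩ <;>
        subst hx <;> rw [hp] <;> [left; right; right; left] <;>
        constructor <;> push_cast <;> omega

/-- With `K_{4m+6}` partitioned into `V₁` of size `2m+1` and `V₂` of size `2m+5`,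
crossing edges coloured `-1` and all other edges `+1`, the colour sum of every
Hamilton cycle is congruent to `2` modulo `4`. -/
theorem stmt8 (m : ℕ) (V1 V2 : Finset (Fin (4 * m + 6)))
    (hdisj : Disjoint V1 V2) (hcover : V1 ∪ V2 = Finset.univ)
    (h1 : V1.card = 2 * m + 1) (h2 : V2.card = 2 * m + 5)
    (c : Sym2 (Fin (4 * m + 6)) → ℤ)
    (hc : ∀ u v : Fin (4 * m + 6), u ≠ v →
      c s(u, v) = if (u ∈ V1 ∧ v ∈ V2) ∨ (u ∈ V2 ∧ v ∈ V1) then -1 else 1) :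
    ∀ (a : Fin (4 * m + 6)) (w : (⊤ : SimpleGraph (Fin (4 * m + 6))).Walk a a),
      w.IsHamiltonianCycle → (w.edges.map c).sum % 4 = 2 := by
  intro a w hw
  set g : Fin (4 * m + 6) → ℤ := fun v => if v ∈ V1 then -1 else 1 with hgdef
  have hg : ∀ v, g v * g v = 1 := by
    intro v; by_cases hv : v ∈ V1 <;> simp [hgdef, hv]
  set f2 : Sym2 (Fin (4 * m + 6)) → ℤ :=
    Sym2.lift ⟨fun u v => g u * g v, fun u v => mul_comm _ _⟩ with hf2def
  -- membership characterization
  have hmem : ∀ v : Fin (4 * m + 6), v ∉ V1 → v ∈ V2 := by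
    intro v hv
    have : v ∈ V1 ∪ V2 := by rw [hcover]; exact Finset.mem_univ v
    simp only [Finset.mem_union] at this
    tauto
  have hmem2 : ∀ v : Fin (4 * m + 6), v ∈ V1 → v ∉ V2 := by
    intro v hv
    exact Finset.disjoint_left.mp hdisj hv
  -- c agrees with f2 on edges of w
  have hagree : ∀ e ∈ w.edges, c e = f2 e := by
    intro e he
    have hadj := w.edges_subset_edgeSet he
    revert hadj
    refine Sym2.ind (fun u v => ?_) e
    intro hadj
    rw [SimpleGraph.mem_edgeSet] at hadj
    have hne : u ≠ v := hadj.ne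
    rw [hc u v hne, hf2def, Sym2.lift_mk]
    by_cases hu : u ∈ V1 <;> by_cases hv : v ∈ V1
    · have h1 := hmem2 u hu; have h2 := hmem2 v hv
      rw [if_neg (by tauto)]; simp [hgdef, hu, hv]
    · have h2 := hmem v hv
      rw [if_pos (Or.inl ⟨hu, h2⟩)]; simp [hgdef, hu, hv]
    · have h1 := hmem u hu
      rw [if_pos (Or.inr ⟨h1, hv⟩)]; simp [hgdef, hu, hv]
    · have h1 := hmem u hu; have h2 := hmem v hv
      have h1' := fun h => hu (by exact h)
      rw [if_neg (by tauto)]; simp [hgdef, hu, hv]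
  -- rewrite the map
  rw [List.map_congr_left hagree]
  have hprod : (w.edges.map f2).prod = 1 := by
    rw [hf2def, walk_edge_prod g hg w, hg a]
  have hpm : ∀ x ∈ w.edges.map f2, x = 1 ∨ x = -1 := by
    intro x hx
    rw [List.mem_map] at hx
    obtain ⟨e, he, rfl⟩ := hx
    rw [← hagree e he]
    have hadj := w.edges_subset_edgeSet he
    revert hadj
    refine Sym2.ind (fun u v => ?_) e
    intro hadj
    rw [SimpleGraph.mem_edgeSet] at hadj
    rw [hc u v hadj.ne]
    split <;> simp
  have hlen : (w.edges.map f2).length = 4 * m + 6 := by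
    rw [List.length_map, SimpleGraph.Walk.length_edges, hw.length_eq]
    simp
  rcases pm_one_sum_mod _ hpm with ⟨hp, hs⟩ | ⟨hp, hs⟩
  · rw [hs, hlen]; push_cast; omega
  · rw [hprod] at hp; omega
end

section
/- Let n = 16k^2 with k odd, partition V(K_n) into V_1 of size 8k^2-2k and V_2 of size 8k^2+2k, colour crossing edges -1 and non-crossing edges +1. Then for every spanning subgraph F of K_n that is a disjoint union of n/8 stars each with 7 leaves (an S-factor where S = K_{1,7}), the colour sum c(F) is congruent to 2 modulo 4; in particular no 0-sum S-factor exists. -/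
/-- With `n = 16k²` (`k` odd), `K_n` partitioned into `V₁` of size `8k²-2k` and
`V₂` of size `8k²+2k`, crossing edges coloured `-1` and all other edges `+1`:
for every spanning subgraph `F` of `K_n` that is a disjoint union of `n/8` stars
with 7 leaves each (encoded via a centre-assignment `f`), the colour sum of `F`
is congruent to `2` mod `4`; in particular no `0`-sum `K_{1,7}`-factor exists. -/
theorem stmt10 (k : ℕ) (hk : Odd k) (V1 V2 : Finset (Fin (16 * k ^ 2)))
    (hdisj : Disjoint V1 V2) (hcover : V1 ∪ V2 = Finset.univ)
    (h1 : V1.card = 8 * k ^ 2 - 2 * k) (h2 : V2.card = 8 * k ^ 2 + 2 * k)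
    (c : Sym2 (Fin (16 * k ^ 2)) → ℤ)
    (hc : ∀ u v : Fin (16 * k ^ 2), u ≠ v →
      c s(u, v) = if (u ∈ V1 ∧ v ∈ V2) ∨ (u ∈ V2 ∧ v ∈ V1) then -1 else 1)
    (F : SimpleGraph (Fin (16 * k ^ 2))) [DecidableRel F.Adj]
    (f : Fin (16 * k ^ 2) → Fin (16 * k ^ 2))
    (hidem : ∀ v, f (f v) = f v)
    (hadj : ∀ u v, F.Adj u v ↔ u ≠ v ∧ f u = f v ∧ (f u = u ∨ f v = v))
    (hstar : ∀ v, f v = v → (Finset.univ.filter (fun w => f w = v)).card = 8) :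
    (∑ e ∈ F.edgeFinset, c e) % 4 = 2 := by
  classical
  set C := Finset.univ.filter (fun v : Fin (16 * k ^ 2) => f v = v) with hCdef
  set L := Finset.univ.filter (fun w : Fin (16 * k ^ 2) => ¬ f w = w) with hLdef
  have himg : (Finset.univ.image f) = C := by
    ext v
    simp only [Finset.mem_image, hCdef, Finset.mem_filter, Finset.mem_univ, true_and]
    constructor
    · rintro ⟨a, rfl⟩; exact hidem a
    · intro h; exact ⟨v, h⟩
  -- size of the centre set
  have hCcard : 8 * C.card = 16 * k ^ 2 := by
    have hU : (Finset.univ : Finset (Fin (16 * k ^ 2))).card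
        = ∑ b ∈ Finset.univ.image f, (Finset.univ.filter (fun w => f w = b)).card :=
      Finset.card_eq_sum_card_fiberwise
        (fun x _ => Finset.mem_image_of_mem f (Finset.mem_univ x))
    rw [himg] at hU
    have hU' : (Finset.univ : Finset (Fin (16 * k ^ 2))).card = ∑ b ∈ C, 8 := by
      rw [hU]
      refine Finset.sum_congr rfl (fun b hb => ?_)
      exact hstar b ((Finset.mem_filter.mp hb).2)
    simp only [Finset.card_univ, Fintype.card_fin, Finset.sum_const, smul_eq_mul] at hU'
    omega
  have hCL : C.card + L.card = 16 * k ^ 2 := by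
    have := Finset.card_filter_add_card_filter_not
      (s := (Finset.univ : Finset (Fin (16 * k ^ 2)))) (p := fun v => f v = v)
    simpa [← hCdef, ← hLdef, Finset.card_univ] using this
  -- edge set is the image of leaves
  have hedge : F.edgeFinset = L.image (fun w => s(w, f w)) := by
    ext e
    induction e using Sym2.ind with
    | _ u v =>
      simp only [SimpleGraph.mem_edgeFinset, SimpleGraph.mem_edgeSet, hadj,
        Finset.mem_image, hLdef, Finset.mem_filter, Finset.mem_univ, true_and]
      constructor
      · rintro ⟨hne, hfe, h | h⟩
        · refine ⟨v, ?_, ?_⟩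
          · rw [← hfe, h]; exact hne
          · rw [← hfe, h]; exact Sym2.eq_swap
        · refine ⟨u, ?_, ?_⟩
          · rw [hfe, h]; exact fun hh => hne hh.symm
          · rw [hfe, h]
      · rintro ⟨w, hw, heq⟩
        rw [Sym2.eq_iff] at heq
        rcases heq with ⟨rfl, rfl⟩ | ⟨rfl, rfl⟩
        · exact ⟨fun hh => hw hh.symm, by rw [hidem], Or.inr (hidem w)⟩
        · exact ⟨fun hh => hw hh, by rw [hidem], Or.inl (hidem w)⟩
  have hsum : ∑ e ∈ F.edgeFinset, c e = ∑ w ∈ L, c s(w, f w) := by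
    rw [hedge, Finset.sum_image]
    intro w hw w' hw' h
    rw [Sym2.eq_iff] at h
    rcases h with ⟨h1, h2⟩ | ⟨h1, h2⟩
    · exact h1
    · exfalso
      simp only [hLdef, Finset.mem_coe, Finset.mem_filter, Finset.mem_univ, true_and] at hw'
      exact hw' (by rw [← hidem w', ← h1, h2])
  set P : Fin (16 * k ^ 2) → Prop :=
    fun w => (w ∈ V1 ∧ f w ∈ V2) ∨ (w ∈ V2 ∧ f w ∈ V1) with hPdef
  have hval : ∀ w ∈ L, c s(w, f w) = if P w then (-1 : ℤ) else 1 := by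
    intro w hw
    simp only [hLdef, Finset.mem_filter, Finset.mem_univ, true_and] at hw
    exact hc w (f w) (Ne.symm hw)
  set m := (L.filter P).card with hmdef
  set m' := (L.filter (fun w => ¬ P w)).card with hm'def
  have hmm' : m + m' = L.card := Finset.card_filter_add_card_filter_not (p := P)
  have hsum2 : ∑ e ∈ F.edgeFinset, c e = (m' : ℤ) - m := by
    rw [hsum, Finset.sum_congr rfl hval, Finset.sum_ite, Finset.sum_const, Finset.sum_const,
      ← hmdef, ← hm'def]
    push_cast
    ring
  -- membership in V2 is the complement of V1
  have hmem : ∀ w : Fin (16 * k ^ 2), w ∈ V2 ↔ w ∉ V1 := by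
    intro w
    constructor
    · intro h hh; exact (Finset.disjoint_left.mp hdisj) hh h
    · intro h
      have hw := Finset.mem_univ w
      rw [← hcover, Finset.mem_union] at hw
      tauto
  -- parity of m
  have hpar : 2 ∣ m := by
    rw [← ZMod.natCast_eq_zero_iff]
    have hb : (m : ZMod 2) = ∑ w ∈ L, if P w then (1 : ZMod 2) else 0 := by
      rw [Finset.sum_boole, hmdef]
    have key : ∀ w ∈ L, (if P w then (1 : ZMod 2) else 0)
        = (if w ∈ V1 then 1 else 0) + (if f w ∈ V1 then 1 else 0) := by
      intro w _
      by_cases hw1 : w ∈ V1 <;> by_cases hw2 : f w ∈ V1 <;>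
        simp [hPdef, hw1, hw2, hmem w, hmem (f w)] <;> decide
    rw [hb, Finset.sum_congr rfl key]
    have hsplit : ∑ w ∈ C, ((if w ∈ V1 then (1 : ZMod 2) else 0)
          + (if f w ∈ V1 then 1 else 0))
        + ∑ w ∈ L, ((if w ∈ V1 then (1 : ZMod 2) else 0) + (if f w ∈ V1 then 1 else 0))
        = ∑ w : Fin (16 * k ^ 2), ((if w ∈ V1 then (1 : ZMod 2) else 0)
          + (if f w ∈ V1 then 1 else 0)) := by
      rw [hCdef, hLdef]
      exact Finset.sum_filter_add_sum_filter_not _ _ _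
    have hCzero : ∑ w ∈ C, ((if w ∈ V1 then (1 : ZMod 2) else 0)
        + (if f w ∈ V1 then 1 else 0)) = 0 := by
      refine Finset.sum_eq_zero (fun v hv => ?_)
      have hfv : f v = v := (Finset.mem_filter.mp hv).2
      rw [hfv]
      by_cases h : v ∈ V1 <;> simp [h] <;> decide
    have hc1 : ∑ w : Fin (16 * k ^ 2), (if w ∈ V1 then (1 : ZMod 2) else 0) = 0 := by
      rw [Finset.sum_boole]
      have : 2 ∣ V1.card := by
        rw [h1]; exact Nat.dvd_sub ⟨4 * k ^ 2, by ring⟩ ⟨k, by ring⟩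
      have hfu : Finset.univ.filter (fun w => w ∈ V1) = V1 := by
        ext w; simp
      rw [hfu, ZMod.natCast_eq_zero_iff]
      exact this
    have hc2 : ∑ w : Fin (16 * k ^ 2), (if f w ∈ V1 then (1 : ZMod 2) else 0) = 0 := by
      rw [Finset.sum_comp (fun v => if v ∈ V1 then (1 : ZMod 2) else 0) f, himg]
      refine Finset.sum_eq_zero (fun b hb => ?_)
      have h8 : (Finset.univ.filter (fun w => f w = b)).card = 8 :=
        hstar b ((Finset.mem_filter.mp hb).2)
      rw [h8, nsmul_eq_mul]
      have h80 : ((8 : ℕ) : ZMod 2) = 0 := by decide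
      rw [h80, zero_mul]
    have huniv : ∑ w : Fin (16 * k ^ 2), ((if w ∈ V1 then (1 : ZMod 2) else 0)
        + (if f w ∈ V1 then 1 else 0)) = 0 := by
      rw [Finset.sum_add_distrib, hc1, hc2, add_zero]
    rw [huniv, hCzero, zero_add] at hsplit
    exact hsplit
  obtain ⟨t, ht⟩ := hpar
  obtain ⟨j, hj⟩ : Odd (k ^ 2) := hk.pow
  rw [hsum2]
  omega
end

section
/- Let G be a spanning subgraph of K_n, let c: E(K_n) → {-1,1} be a bipartite 2-colouring with parts V_1, V_2, and let H be an n-vertex graph all of whose vertex degrees have the same parity. Then for any two copies H' and H'' of H in G, the colour sums c(H') and c(H'') are congruent modulo 4. -/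
open Finset

lemma aux_sum_lift {V : Type*} [Fintype V] [DecidableEq V]
    (H : SimpleGraph V) [DecidableRel H.Adj] (q : V → ZMod 2) :
    ∑ e ∈ H.edgeFinset, Sym2.lift ⟨fun u v => q u + q v, fun _ _ => add_comm _ _⟩ e
      = ∑ v, H.degree v • q v := by
  classical
  set P : Finset (V × V) := Finset.univ.filter (fun p : V × V => H.Adj p.1 p.2) with hP
  have hmaps : ∀ p ∈ P, s(p.1, p.2) ∈ H.edgeFinset := by
    intro p hp
    simp only [hP, Finset.mem_filter] at hp
    simpa [SimpleGraph.mem_edgeFinset] using hp.2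
  have fib := Finset.sum_fiberwise_of_maps_to hmaps (fun p : V × V => q p.1)
  have lhs : ∑ p ∈ P, q p.1 = ∑ v, H.degree v • q v := by
    rw [hP, show Finset.univ = (Finset.univ ×ˢ Finset.univ : Finset (V × V)) from
      (Finset.univ_product_univ).symm, Finset.sum_filter, Finset.sum_product]
    refine Finset.sum_congr rfl fun v _ => ?_
    rw [← Finset.sum_filter]
    show ∑ _a ∈ Finset.univ.filter (fun a => H.Adj v a), q v = _
    rw [Finset.sum_const, ← SimpleGraph.neighborFinset_eq_filter,
      H.card_neighborFinset_eq_degree]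
  rw [← lhs, ← fib]
  refine Finset.sum_congr rfl fun e he => ?_
  induction e using Sym2.ind with
  | _ a b =>
    have hab : H.Adj a b := by simpa [SimpleGraph.mem_edgeFinset] using he
    have hne : a ≠ b := hab.ne
    have hfib : P.filter (fun p => s(p.1, p.2) = s(a, b)) = {(a, b), (b, a)} := by
      ext p
      obtain ⟨x, y⟩ := p
      simp only [hP, Finset.mem_filter, Finset.mem_univ, true_and, Finset.mem_insert,
        Finset.mem_singleton, Sym2.eq_iff, Prod.ext_iff]
      constructor
      · rintro ⟨_, h⟩; tauto
      · rintro (⟨rfl, rfl⟩ | ⟨rfl, rfl⟩)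
        · exact ⟨hab, Or.inl ⟨rfl, rfl⟩⟩
        · exact ⟨hab.symm, Or.inr ⟨rfl, rfl⟩⟩
    rw [hfib, Finset.sum_pair (by simp [hne, Prod.ext_iff])]
    simp [add_comm]

/-- Let `G` be a spanning subgraph of `K_n` on the vertex set `V`, let
`c : E(K_n) → {-1,1}` be a bipartite 2-colouring with parts `V₁, V₂` (one of the
colour classes is exactly the set of edges of `G` inside `V₁` or inside `V₂`),
and let `H` be a graph on `V` all of whose degrees have the same parity. Then
for any two copies (embeddings) of `H` in `G`, the colour sums are congruent
modulo 4. -/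
theorem stmt11 {V : Type*} [Fintype V] [DecidableEq V]
    (G H : SimpleGraph V) [DecidableRel H.Adj]
    (c : Sym2 V → ℤ) (hval : ∀ u v : V, u ≠ v → c s(u, v) = 1 ∨ c s(u, v) = -1)
    (V1 V2 : Finset V) (hdisj : Disjoint V1 V2) (hcover : V1 ∪ V2 = Finset.univ)
    (hbip :
      (∀ u v : V, u ≠ v → (c s(u, v) = 1 ↔
        G.Adj u v ∧ ((u ∈ V1 ∧ v ∈ V1) ∨ (u ∈ V2 ∧ v ∈ V2)))) ∨
      (∀ u v : V, u ≠ v → (c s(u, v) = -1 ↔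
        G.Adj u v ∧ ((u ∈ V1 ∧ v ∈ V1) ∨ (u ∈ V2 ∧ v ∈ V2)))))
    (hdeg : ∀ u v : V, H.degree u % 2 = H.degree v % 2)
    (f g : H ↪g G) :
    Int.ModEq 4 (∑ e ∈ H.edgeFinset, c (Sym2.map f e))
      (∑ e ∈ H.edgeFinset, c (Sym2.map g e)) := by
  classical
  rcases isEmpty_or_nonempty V with hV | hne
  · have : H.edgeFinset = ∅ := by
      ext e
      exact absurd (Sym2.ind (fun a b => (IsEmpty.false a).elim) e) not_false
    simp [this]
  obtain ⟨v0⟩ := hne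
  -- basic facts about the partition
  have mem2 : ∀ v : V, v ∈ V2 ↔ v ∉ V1 := by
    intro v
    constructor
    · intro h2 h1; exact (Finset.disjoint_left.1 hdisj) h1 h2
    · intro h1
      have : v ∈ V1 ∪ V2 := hcover ▸ Finset.mem_univ v
      rcases Finset.mem_union.1 this with h | h
      · exact absurd h h1
      · exact h
  obtain ⟨ε, hε, hεbip⟩ : ∃ ε : ℤ, (ε = 1 ∨ ε = -1) ∧ ∀ u v : V, u ≠ v →
      (c s(u, v) = ε ↔ G.Adj u v ∧ ((u ∈ V1 ∧ v ∈ V1) ∨ (u ∈ V2 ∧ v ∈ V2))) := by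
    rcases hbip with h | h
    · exact ⟨1, Or.inl rfl, h⟩
    · exact ⟨-1, Or.inr rfl, h⟩
  -- the parity function of an embedding
  set p : (H ↪g G) → V → ZMod 2 := fun f v => if f v ∈ V1 then 1 else 0 with hp
  -- crossing indicator (integer valued)
  set χ : (H ↪g G) → Sym2 V → ℤ := fun f e =>
    Sym2.lift ⟨fun u v => if p f u = p f v then (0 : ℤ) else 1,
      fun u v => by by_cases h : p f u = p f v <;> simp [h, eq_comm, Ne.symm]⟩ e with hχ
  -- key pointwise identity
  have hpoint : ∀ (f : H ↪g G), ∀ e ∈ H.edgeFinset, c (Sym2.map f e) = ε - 2 * ε * χ f e := by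
    intro f e he
    induction e using Sym2.ind with
    | _ u v =>
      have hadj : H.Adj u v := by simpa [SimpleGraph.mem_edgeFinset] using he
      have hGadj : G.Adj (f u) (f v) := f.map_adj_iff.2 hadj
      have hne : f u ≠ f v := hGadj.ne
      have hmap : Sym2.map f s(u, v) = s(f u, f v) := by simp
      have hiff := hεbip (f u) (f v) hne
      have hinside : ((f u ∈ V1 ∧ f v ∈ V1) ∨ (f u ∈ V2 ∧ f v ∈ V2)) ↔ p f u = p f v := by
        simp only [hp, mem2]
        by_cases h1 : f u ∈ V1 <;> by_cases h2 : f v ∈ V1 <;> simp [h1, h2]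
      by_cases hcross : p f u = p f v
      · have hc : c s(f u, f v) = ε := hiff.2 ⟨hGadj, hinside.2 hcross⟩
        have hχ0 : χ f s(u, v) = 0 := by simp [hχ, hcross]
        rw [hmap, hc, hχ0]; ring
      · have hnotε : c s(f u, f v) ≠ ε := fun hc =>
          hcross (hinside.1 ((hiff.1 hc).2))
        have hcval : c s(f u, f v) = -ε := by
          rcases hval (f u) (f v) hne with h | h <;> rcases hε with rfl | rfl <;>
            first
              | (exact absurd h hnotε)
              | (rw [h]; try ring)
        have hχ1 : χ f s(u, v) = 1 := by simp [hχ, hcross]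
        rw [hmap, hcval, hχ1]; ring
  -- sum decomposition
  have hsum : ∀ (f : H ↪g G), ∑ e ∈ H.edgeFinset, c (Sym2.map f e)
      = (H.edgeFinset.card : ℤ) * ε - 2 * ε * ∑ e ∈ H.edgeFinset, χ f e := by
    intro f
    rw [Finset.sum_congr rfl (hpoint f)]
    rw [Finset.sum_sub_distrib, Finset.sum_const, ← Finset.mul_sum]
    ring
  -- parity of the crossing count
  have hparity : ∀ (f : H ↪g G),
      ((∑ e ∈ H.edgeFinset, χ f e : ℤ) : ZMod 2)
        = (H.degree v0 : ZMod 2) * (V1.card : ZMod 2) := by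
    intro f
    push_cast
    have hcast : ∀ e ∈ H.edgeFinset, ((χ f e : ℤ) : ZMod 2)
        = Sym2.lift ⟨fun u v => p f u + p f v, fun _ _ => add_comm _ _⟩ e := by
      intro e _
      induction e using Sym2.ind with
      | _ u v =>
        by_cases h : p f u = p f v
        · have hc0 : χ f s(u, v) = 0 := by simp [hχ, h]
          have h0 : p f u + p f v = 0 := by
            rw [h]; exact CharTwo.add_self_eq_zero (p f v)
          rw [hc0, Sym2.lift_mk]
          show ((0 : ℤ) : ZMod 2) = p f u + p f v
          rw [h0, Int.cast_zero]
        · have hc1 : χ f s(u, v) = 1 := by simp [hχ, h]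
          have h1 : p f u + p f v = 1 := by
            revert h
            exact (by decide : ∀ a b : ZMod 2, a ≠ b → a + b = 1) (p f u) (p f v)
          rw [hc1, Sym2.lift_mk]
          show ((1 : ℤ) : ZMod 2) = p f u + p f v
          rw [h1, Int.cast_one]
    rw [Finset.sum_congr rfl hcast, aux_sum_lift]
    have hdegcast : ∀ v : V, (H.degree v : ZMod 2) = (H.degree v0 : ZMod 2) := by
      intro v
      rw [ZMod.natCast_eq_natCast_iff]
      exact hdeg v v0
    have hsurj : Function.Surjective (f : V → V) :=
      Finite.injective_iff_surjective.1 f.injective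
    have hcard : (Finset.univ.filter fun v => f v ∈ V1).card = V1.card := by
      apply Finset.card_bij (fun v _ => f v)
      · intro a ha; simpa using (Finset.mem_filter.1 ha).2
      · intro a _ b _ h; exact f.injective h
      · intro b hb
        obtain ⟨a, rfl⟩ := hsurj b
        exact ⟨a, by simpa using hb, rfl⟩
    have hfilter : ∑ v : V, p f v = (V1.card : ZMod 2) := by
      rw [hp]
      rw [Finset.sum_boole, hcard]
    calc ∑ v : V, H.degree v • p f v
        = ∑ v : V, (H.degree v : ZMod 2) * p f v := by
          refine Finset.sum_congr rfl fun v _ => ?_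
          rw [nsmul_eq_mul]
      _ = (H.degree v0 : ZMod 2) * ∑ v : V, p f v := by
          rw [Finset.mul_sum]
          exact Finset.sum_congr rfl fun v _ => by rw [hdegcast v]
      _ = (H.degree v0 : ZMod 2) * (V1.card : ZMod 2) := by rw [hfilter]
  -- conclude
  have h2dvd : (2 : ℤ) ∣ (∑ e ∈ H.edgeFinset, χ f e) - (∑ e ∈ H.edgeFinset, χ g e) := by
    have hz : (((∑ e ∈ H.edgeFinset, χ f e) - (∑ e ∈ H.edgeFinset, χ g e) : ℤ) : ZMod 2) = 0 := by
      rw [Int.cast_sub, hparity f, hparity g, sub_self]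
    exact_mod_cast (ZMod.intCast_zmod_eq_zero_iff_dvd _ 2).1 hz
  obtain ⟨k, hk⟩ := h2dvd
  rw [Int.modEq_iff_dvd, hsum f, hsum g]
  exact ⟨ε * k, by linear_combination 2 * ε * hk⟩
end

section
/- Let ε ∈ [0, 1/10], n be sufficiently large, and G be an n-vertex graph with minimum degree at least (1-ε)n, equipped with a 2-edge-colouring c that is not bipartite. Then G contains a 4-cycle having exactly three edges of one colour and one edge of the other colour. -/
/-- A 2-edge-colouring `c` of `G` is bipartite if there is a partition
`(V1, V1ᶜ)` of the vertices such that one colour class is exactly the set of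
edges of `G` lying inside `V1` or inside `V1ᶜ`. -/
def IsBipartiteColouring {n : ℕ} (G : SimpleGraph (Fin n))
    (c : Sym2 (Fin n) → Bool) : Prop :=
  ∃ (V1 : Finset (Fin n)) (b : Bool), ∀ u v : Fin n, G.Adj u v →
    (c s(u, v) = b ↔ ((u ∈ V1 ∧ v ∈ V1) ∨ (u ∉ V1 ∧ v ∉ V1)))

private lemma bxEven : ∀ w x y z : Bool,
    ¬([w, x, y, z].count true = 1 ∨ [w, x, y, z].count true = 3) →
    Bool.xor w x = Bool.xor z y := by decide

private lemma bxCoc : ∀ p q r : Bool,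
    Bool.xor p r = Bool.xor (Bool.xor p q) (Bool.xor q r) := by decide

private lemma bxB : ∀ a b x y : Bool,
    Bool.xor a b = Bool.xor x y → Bool.xor a x = Bool.xor b y := by decide

private lemma bxSolve : ∀ a g b : Bool, Bool.xor a g = b → a = Bool.xor b g := by decide

private lemma bxFinal : ∀ b p q : Bool,
    Bool.xor b (Bool.xor p q) = b ↔
      ((p = false ∧ q = false) ∨ (¬p = false ∧ ¬q = false)) := by decide

/-- Let `ε ∈ [0,1/10]`, `n` sufficiently large, and `G` an `n`-vertex graph with
minimum degree at least `(1-ε)n`, equipped with a non-bipartite 2-edge-colouring.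
Then `G` contains a 4-cycle with exactly three edges of one colour and one of
the other. -/
theorem stmt13 (ε : ℝ) (hε0 : 0 ≤ ε) (hε1 : ε ≤ 1 / 10) :
    ∃ n0 : ℕ, ∀ n : ℕ, n0 ≤ n →
    ∀ (G : SimpleGraph (Fin n)) (c : Sym2 (Fin n) → Bool),
      (∀ v : Fin n, (1 - ε) * n ≤ ((G.neighborSet v).ncard : ℝ)) →
      ¬IsBipartiteColouring G c →
      ∃ a b d e : Fin n, G.Adj a b ∧ G.Adj b d ∧ G.Adj d e ∧ G.Adj e a ∧
        a ≠ d ∧ b ≠ e ∧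
        ([c s(a, b), c s(b, d), c s(d, e), c s(e, a)].count true = 1 ∨
         [c s(a, b), c s(b, d), c s(d, e), c s(e, a)].count true = 3) := by
  refine ⟨100, ?_⟩
  intro n hn G c hdeg hnb
  by_contra hcon
  apply hnb
  classical
  -- degree bound in ℕ
  have hdeg10 : ∀ v : Fin n, 9 * n ≤ 10 * G.degree v := by
    intro v
    have h1 : (G.neighborSet v).ncard = G.degree v := by
      rw [Set.ncard_eq_toFinset_card']; rfl
    have h2 := hdeg v
    rw [h1] at h2
    have hn0 : (0:ℝ) ≤ (n:ℝ) := Nat.cast_nonneg n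
    have h3 : (9:ℝ) * n ≤ 10 * (G.degree v : ℝ) := by nlinarith
    exact_mod_cast h3
  -- common neighbours avoiding a small set
  have hcn : ∀ (u v z : Fin n) (S : Finset (Fin n)), S.card ≤ 6 →
      ∃ w : Fin n, G.Adj u w ∧ G.Adj v w ∧ G.Adj z w ∧ w ∉ S := by
    intro u v z S hS
    have hA : (((G.neighborFinset u ∩ G.neighborFinset v) ∩ G.neighborFinset z) \ S).Nonempty := by
      rw [← Finset.card_pos]
      have c1 := Finset.card_inter_add_card_union (G.neighborFinset u) (G.neighborFinset v)
      have c2 := Finset.card_inter_add_card_union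
        (G.neighborFinset u ∩ G.neighborFinset v) (G.neighborFinset z)
      have c3 : (G.neighborFinset u ∪ G.neighborFinset v).card ≤ n := by
        simpa using Finset.card_le_univ (G.neighborFinset u ∪ G.neighborFinset v)
      have c4 : ((G.neighborFinset u ∩ G.neighborFinset v) ∪ G.neighborFinset z).card ≤ n := by
        simpa using Finset.card_le_univ
          ((G.neighborFinset u ∩ G.neighborFinset v) ∪ G.neighborFinset z)
      have c5 := Finset.le_card_sdiff S
        ((G.neighborFinset u ∩ G.neighborFinset v) ∩ G.neighborFinset z)
      have d1 := hdeg10 u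
      have d2 := hdeg10 v
      have d3 := hdeg10 z
      have e1 : (G.neighborFinset u).card = G.degree u := rfl
      have e2 : (G.neighborFinset v).card = G.degree v := rfl
      have e3 : (G.neighborFinset z).card = G.degree z := rfl
      omega
    obtain ⟨w, hw⟩ := hA
    simp only [Finset.mem_sdiff, Finset.mem_inter, SimpleGraph.mem_neighborFinset] at hw
    exact ⟨w, hw.1.1.1, hw.1.1.2, hw.1.2, hw.2⟩
  -- even parity on every 4-cycle
  have hX : ∀ a b d e : Fin n, G.Adj a b → G.Adj b d → G.Adj d e → G.Adj e a →
      a ≠ d → b ≠ e →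
      Bool.xor (c s(a,b)) (c s(b,d)) = Bool.xor (c s(e,a)) (c s(d,e)) := by
    intro a b d e h1 h2 h3 h4 h5 h6
    have h7 : ¬(([c s(a,b), c s(b,d), c s(d,e), c s(e,a)].count true = 1) ∨
        ([c s(a,b), c s(b,d), c s(d,e), c s(e,a)].count true = 3)) :=
      fun H => hcon ⟨a, b, d, e, h1, h2, h3, h4, h5, h6, H⟩
    exact bxEven _ _ _ _ h7
  -- common neighbour function
  have hwex : ∀ u v : Fin n, ∃ w, G.Adj u w ∧ G.Adj v w := by
    intro u v
    obtain ⟨w, h1, h2, -, -⟩ := hcn u v v ∅ (by simp)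
    exact ⟨w, h1, h2⟩
  choose W hW1 hW2 using hwex
  set g : Fin n → Fin n → Bool :=
    fun u v => Bool.xor (c s(u, W u v)) (c s(v, W u v)) with hgdef
  -- g is well-defined: independent of the choice of common neighbour
  have hg : ∀ u v w : Fin n, u ≠ v → G.Adj u w → G.Adj v w →
      g u v = Bool.xor (c s(u,w)) (c s(v,w)) := by
    intro u v w huv h1 h2
    by_cases hw : w = W u v
    · subst hw; rfl
    · have h3 := hX u (W u v) v w (hW1 u v) ((hW2 u v).symm) h2 h1.symm huv (Ne.symm hw)
      rw [show s(W u v, v) = s(v, W u v) from Sym2.eq_swap,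
        show s(w, u) = s(u, w) from Sym2.eq_swap] at h3
      simpa only [hgdef] using h3
  have hgd : ∀ u, g u u = false := by
    intro u; simp [hgdef]
  have hgs : ∀ u v, g u v = g v u := by
    intro u v
    by_cases huv : u = v
    · subst huv; rfl
    · rw [hg u v (W v u) huv (hW2 v u) (hW1 v u)]
      simp only [hgdef]
      exact Bool.xor_comm _ _
  -- cocycle identity
  have hcoc : ∀ u v z : Fin n, u ≠ v → v ≠ z → u ≠ z →
      g u z = Bool.xor (g u v) (g v z) := by
    intro u v z h1 h2 h3
    obtain ⟨w, a1, a2, a3, -⟩ := hcn u v z ∅ (by simp)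
    rw [hg u v w h1 a1 a2, hg v z w h2 a2 a3, hg u z w h3 a1 a3]
    exact bxCoc _ _ _
  set Bf : Fin n → Fin n → Bool :=
    fun u v => Bool.xor (c s(u,v)) (g u v) with hBdef
  have hBsymm : ∀ u v : Fin n, Bf u v = Bf v u := by
    intro u v
    simp only [hBdef]
    rw [show s(v,u) = s(u,v) from Sym2.eq_swap, ← hgs u v]
  -- adjacent edges get the same B-value
  have hA : ∀ u v z : Fin n, G.Adj u v → G.Adj v z → Bf u v = Bf v z := by
    intro u v z h1 h2
    by_cases huz : u = z
    · subst huz; exact hBsymm u v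
    · obtain ⟨w, a1, -, a3, hwS⟩ := hcn u z z {v} (by simp)
      simp only [Finset.mem_singleton] at hwS
      have hvw : v ≠ w := Ne.symm hwS
      have h3 := hX u v z w h1 h2 a3 a1.symm huz hvw
      rw [show s(w,u) = s(u,w) from Sym2.eq_swap] at h3
      have h4 := hg u z w huz a1 a3
      have h5 := hcoc u v z (G.ne_of_adj h1) (G.ne_of_adj h2) huz
      have h6 : Bool.xor (c s(u,v)) (c s(v,z)) = Bool.xor (g u v) (g v z) :=
        h3.trans (h4.symm.trans h5)
      simp only [hBdef]
      exact bxB _ _ _ _ h6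
  have hv0 : (0:ℕ) < n := by omega
  set v0 : Fin n := ⟨0, hv0⟩ with hv0def
  -- all edges get the same B-value
  have hB : ∀ u v : Fin n, G.Adj u v → Bf u v = Bf v0 (W v0 v0) := by
    intro u v huv
    obtain ⟨w, a1, a2, -, -⟩ := hcn u v0 v0 ∅ (by simp)
    calc Bf u v = Bf v u := hBsymm u v
      _ = Bf u w := hA v u w huv.symm a1
      _ = Bf w v0 := hA u w v0 a1 a2.symm
      _ = Bf v0 (W v0 v0) := hA w v0 (W v0 v0) a2.symm (hW1 v0 v0)
  -- the colouring is bipartite: contradiction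
  refine ⟨Finset.univ.filter (fun u => g u v0 = false), Bf v0 (W v0 v0), ?_⟩
  intro u v huv
  simp only [Finset.mem_filter, Finset.mem_univ, true_and]
  have h1 := hB u v huv
  have h2 : g u v = Bool.xor (g u v0) (g v v0) := by
    by_cases hu : u = v0
    · subst hu
      rw [hgd, Bool.false_xor, hgs]
    · by_cases hv : v = v0
      · subst hv
        rw [hgd, Bool.xor_false]
      · rw [hcoc u v0 v hu (Ne.symm hv) (G.ne_of_adj huv), hgs v0 v]
  simp only [hBdef] at h1
  have h3 : c s(u,v) = Bool.xor (Bf v0 (W v0 v0)) (g u v) := bxSolve _ _ _ h1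
  rw [h3, h2]
  exact bxFinal _ _ _
end

section
/- Fix ε, ν > 0 and set ξ = (1 - 2ν - 4ε)/8. Let G be an n-vertex graph with minimum degree at least (1-ε)n equipped with a 2-edge-colouring in red and blue such that each colour class has size between (1/2 - ν)C(n,2) and (1/2 + ν)C(n,2). Then there are at least ξn vertices of G each incident to at least ξn red edges and at least ξn blue edges. -/
set_option maxHeartbeats 1000000

theorem core14 (ε ν ξ x y N : ℝ) (hε : 0 < ε) (hν : 0 < ν)
    (hξdef : ξ = (1 - 2*ν - 4*ε)/8) (hξpos : 0 < ξ)
    (hN : 0 < N)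
    (hx0 : 0 ≤ x) (hy0 : 0 ≤ y) (hxy1 : x + y ≤ N)
    (h1 : N - ξ*N < x + y)
    (h2x : x * ((1 - ε - ξ)*N) ≤ (1/2 + ν)*N*N)
    (h2y : y * ((1 - ε - ξ)*N) ≤ (1/2 + ν)*N*N)
    (h3 : x*y ≤ ξ*N*(x+y) + ε*N*y) (h3' : x*y ≤ ξ*N*(x+y) + ε*N*x) : False := by
  have hN2 : (0:ℝ) < N^2 := by positivity
  set r := x / N with hr
  set s := y / N with hs
  have hr0 : 0 ≤ r := by positivity
  have hs0 : 0 ≤ s := by positivity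
  have hrs1 : r + s ≤ 1 := by
    rw [hr, hs, ← add_div, div_le_one hN]; exact hxy1
  have h1' : 1 - ξ < r + s := by
    rw [hr, hs, ← add_div, lt_div_iff₀ hN]; nlinarith [h1]
  have h2r : r * (1 - ε - ξ) ≤ 1/2 + ν := by
    rw [hr, div_mul_eq_mul_div, div_le_iff₀ hN]; nlinarith [h2x]
  have h2s : s * (1 - ε - ξ) ≤ 1/2 + ν := by
    rw [hs, div_mul_eq_mul_div, div_le_iff₀ hN]; nlinarith [h2y]
  have h3a : r*s ≤ ξ*(r+s) + ε*s := by
    rw [hr, hs, div_mul_div_comm, ← add_div, ← mul_div_assoc, ← mul_div_assoc,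
      div_add_div _ _ (ne_of_gt hN) (ne_of_gt hN), div_le_div_iff₀ (by positivity) (by positivity)]
    nlinarith [h3, hN]
  have h3b : r*s ≤ ξ*(r+s) + ε*r := by
    rw [hr, hs, div_mul_div_comm, ← add_div, ← mul_div_assoc, ← mul_div_assoc,
      div_add_div _ _ (ne_of_gt hN) (ne_of_gt hN), div_le_div_iff₀ (by positivity) (by positivity)]
    nlinarith [h3', hN]
  nlinarith [mul_nonneg hr0 hs0, sq_nonneg (r-s), sq_nonneg (r+s-1), mul_pos hξpos hε,
    sq_nonneg ξ, mul_nonneg hr0 hε.le, mul_nonneg hs0 hε.le]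

/-- Fix `ε, ν > 0` with `ξ = (1 - 2ν - 4ε)/8 > 0`. Let `G` be an `n`-vertex
graph with minimum degree at least `(1-ε)n` with a `ν`-balanced 2-edge-colouring
in red (`true`) and blue (`false`). Then at least `ξn` vertices each have red
degree at least `ξn` and blue degree at least `ξn`. -/
theorem stmt14 (ε ν : ℝ) (hε : 0 < ε) (hν : 0 < ν) (hξ : 2 * ν + 4 * ε < 1)
    (n : ℕ) (G : SimpleGraph (Fin n)) (c : Sym2 (Fin n) → Bool)
    (hmin : ∀ v : Fin n, (1 - ε) * n ≤ ((G.neighborSet v).ncard : ℝ))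
    (hredLB : (1 / 2 - ν) * (n.choose 2) ≤
        (({e ∈ G.edgeSet | c e = true}.ncard : ℝ)))
    (hredUB : (({e ∈ G.edgeSet | c e = true}.ncard : ℝ)) ≤
        (1 / 2 + ν) * (n.choose 2))
    (hblueLB : (1 / 2 - ν) * (n.choose 2) ≤
        (({e ∈ G.edgeSet | c e = false}.ncard : ℝ)))
    (hblueUB : (({e ∈ G.edgeSet | c e = false}.ncard : ℝ)) ≤
        (1 / 2 + ν) * (n.choose 2)) :
    (1 - 2 * ν - 4 * ε) / 8 * n ≤
      (({v : Fin n |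
          (1 - 2 * ν - 4 * ε) / 8 * n ≤
            (({w : Fin n | G.Adj v w ∧ c s(v, w) = true}.ncard : ℝ)) ∧
          (1 - 2 * ν - 4 * ε) / 8 * n ≤
            (({w : Fin n | G.Adj v w ∧ c s(v, w) = false}.ncard : ℝ))}.ncard : ℝ)) := by
  classical
  set ξ : ℝ := (1 - 2 * ν - 4 * ε) / 8 with hξdef
  have hξpos : 0 < ξ := by rw [hξdef]; linarith
  rcases Nat.eq_zero_or_pos n with hn | hn
  · subst hn
    simp only [Nat.cast_zero, mul_zero]
    positivity
  have hN : (0:ℝ) < n := by exact_mod_cast hn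
  -- Finset versions of degree sets
  set rd : Fin n → Finset (Fin n) :=
    fun v => Finset.univ.filter (fun w => G.Adj v w ∧ c s(v, w) = true) with hrd
  set bd : Fin n → Finset (Fin n) :=
    fun v => Finset.univ.filter (fun w => G.Adj v w ∧ c s(v, w) = false) with hbd
  set nd : Fin n → Finset (Fin n) :=
    fun v => Finset.univ.filter (fun w => G.Adj v w) with hnd
  have hrdcard : ∀ v, ({w : Fin n | G.Adj v w ∧ c s(v, w) = true}.ncard) = (rd v).card := by
    intro v; rw [← Set.ncard_coe_finset]; congr 1; ext w; simp [hrd]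
  have hbdcard : ∀ v, ({w : Fin n | G.Adj v w ∧ c s(v, w) = false}.ncard) = (bd v).card := by
    intro v; rw [← Set.ncard_coe_finset]; congr 1; ext w; simp [hbd]
  have hndcard : ∀ v, ((G.neighborSet v).ncard) = (nd v).card := by
    intro v; rw [← Set.ncard_coe_finset]; congr 1; ext w; simp [hnd, SimpleGraph.mem_neighborSet]
  have hsplit : ∀ v, (nd v).card = (rd v).card + (bd v).card := by
    intro v
    rw [← Finset.card_union_of_disjoint]
    · congr 1; ext w
      simp only [hnd, hrd, hbd, Finset.mem_union, Finset.mem_filter, Finset.mem_univ, true_and]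
      cases h : c s(v, w) <;> tauto
    · simp only [Finset.disjoint_left, hrd, hbd, Finset.mem_filter, Finset.mem_univ, true_and]
      rintro w ⟨-, h1⟩ ⟨-, h2⟩; rw [h1] at h2; exact Bool.noConfusion h2
  have hmin' : ∀ v, (1 - ε) * n ≤ ((nd v).card : ℝ) := by
    intro v; rw [← hndcard]; exact hmin v
  have hndle : ∀ v, (nd v).card ≤ n := by
    intro v; simpa using (Finset.card_le_card (Finset.subset_univ (nd v)))
  -- the three vertex classes
  set Bf : Finset (Fin n) := Finset.univ.filter
    (fun v => ξ * n ≤ ((rd v).card : ℝ) ∧ ξ * n ≤ ((bd v).card : ℝ)) with hBf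
  set R : Finset (Fin n) := Finset.univ.filter (fun v => ((bd v).card : ℝ) < ξ * n) with hR
  set S : Finset (Fin n) := Finset.univ.filter
    (fun v => ((rd v).card : ℝ) < ξ * n ∧ ¬ (((bd v).card : ℝ) < ξ * n)) with hS
  have hgoal : ({v : Fin n |
          ξ * n ≤ (({w : Fin n | G.Adj v w ∧ c s(v, w) = true}.ncard : ℝ)) ∧
          ξ * n ≤ (({w : Fin n | G.Adj v w ∧ c s(v, w) = false}.ncard : ℝ))}.ncard) = Bf.card := by
    rw [← Set.ncard_coe_finset]; congr 1; ext v
    simp only [hBf, Finset.coe_filter, Finset.mem_univ, true_and, Set.mem_setOf_eq,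
      hrdcard, hbdcard]
  rw [hgoal]
  by_contra hB
  push_neg at hB
  -- cover and disjointness
  have hcover : Finset.univ ⊆ Bf ∪ R ∪ S := by
    intro v _
    simp only [hBf, hS, hR, Finset.mem_union, Finset.mem_filter, Finset.mem_univ, true_and]
    by_cases h1 : ((bd v).card : ℝ) < ξ * n
    · tauto
    · by_cases h2 : ((rd v).card : ℝ) < ξ * n
      · tauto
      · push_neg at h1 h2; tauto
  have hcard_cover : n ≤ Bf.card + R.card + S.card := by
    calc n = (Finset.univ : Finset (Fin n)).card := by simp
    _ ≤ (Bf ∪ R ∪ S).card := Finset.card_le_card hcover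
    _ ≤ (Bf ∪ R).card + S.card := Finset.card_union_le _ _
    _ ≤ Bf.card + R.card + S.card := by
        exact Nat.add_le_add_right (Finset.card_union_le _ _) _
  have hRS : Disjoint R S := by
    simp only [Finset.disjoint_left, hR, hS, Finset.mem_filter, Finset.mem_univ, true_and]
    tauto
  have hRScard : R.card + S.card ≤ n := by
    rw [← Finset.card_union_of_disjoint hRS]
    simpa using Finset.card_le_card (Finset.subset_univ (R ∪ S))
  -- handshake for each colour
  have hchoose : ((n.choose 2 : ℕ) : ℝ) ≤ n * n / 2 := by
    rw [Nat.cast_choose_two]; nlinarith [hN]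
  have hhand : ∀ b : Bool, (∑ v, (Finset.univ.filter
      (fun w => G.Adj v w ∧ c s(v, w) = b)).card) = 2 * ({e ∈ G.edgeSet | c e = b}.ncard) := by
    intro b
    set Gr : SimpleGraph (Fin n) :=
      { Adj := fun u w => G.Adj u w ∧ c s(u, w) = b
        symm := by constructor; intro u w h; exact ⟨h.1.symm, by rw [Sym2.eq_swap]; exact h.2⟩
        loopless := by constructor; intro v h; exact G.irrefl h.1 } with hGr
    haveI : DecidableRel Gr.Adj := Classical.decRel _
    have hedge : Gr.edgeFinset.card = {e ∈ G.edgeSet | c e = b}.ncard := by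
      have hset : (Gr.edgeFinset : Set (Sym2 (Fin n))) = {e ∈ G.edgeSet | c e = b} := by
        rw [SimpleGraph.coe_edgeFinset]
        ext e
        induction e using Sym2.ind with
        | _ u w => simp [SimpleGraph.mem_edgeSet, hGr]
      rw [← Set.ncard_coe_finset, hset]
    rw [← hedge, ← SimpleGraph.sum_degrees_eq_twice_card_edges]
    apply Finset.sum_congr rfl
    intro v _
    have e2 : (Gr.neighborFinset v).card
        = {w : Fin n | G.Adj v w ∧ c s(v, w) = b}.ncard := by
      rw [← Set.ncard_coe_finset]; congr 1; ext w
      simp only [Finset.mem_coe, SimpleGraph.mem_neighborFinset, Set.mem_setOf_eq]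
      exact Iff.rfl
    show _ = (Gr.neighborFinset v).card
    rw [e2, ← Set.ncard_coe_finset]
    congr 1; ext w; simp
  have hhand_red := hhand true
  have hhand_blue := hhand false
  -- degree sum bounds
  have h2gen : ∀ b : Bool, (∑ v, ((Finset.univ.filter
      (fun w => G.Adj v w ∧ c s(v, w) = b)).card : ℝ)) ≤ (1/2 + ν) * n * n := by
    intro b
    have hcast : (∑ v, ((Finset.univ.filter
        (fun w => G.Adj v w ∧ c s(v, w) = b)).card : ℝ))
        = ((∑ v, (Finset.univ.filter (fun w => G.Adj v w ∧ c s(v, w) = b)).card : ℕ) : ℝ) := by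
      push_cast; ring
    rw [hcast, hhand b]
    have hub : (({e ∈ G.edgeSet | c e = b}.ncard : ℝ)) ≤ (1 / 2 + ν) * (n.choose 2) := by
      cases b
      · exact hblueUB
      · exact hredUB
    push_cast
    have hfac : (0:ℝ) ≤ (1/2 + ν) * ((n:ℝ) * n / 2 - (n.choose 2 : ℕ)) :=
      mul_nonneg (by linarith) (by linarith [hchoose])
    nlinarith [hub]
  have h2x : (R.card : ℝ) * ((1 - ε - ξ) * n) ≤ (1/2 + ν) * n * n := by
    have hlb : ∀ v ∈ R, (1 - ε - ξ) * n ≤ ((rd v).card : ℝ) := by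
      intro v hv
      simp only [hR, Finset.mem_filter, Finset.mem_univ, true_and] at hv
      have h1 := hmin' v
      have h2 : ((nd v).card : ℝ) = (rd v).card + (bd v).card := by
        exact_mod_cast congrArg (Nat.cast : ℕ → ℝ) (hsplit v)
      nlinarith [hv]
    have hA : (R.card : ℝ) * ((1-ε-ξ)*n) ≤ ∑ v ∈ R, ((rd v).card : ℝ) := by
      have := Finset.card_nsmul_le_sum R (fun v => ((rd v).card : ℝ)) ((1-ε-ξ)*n) hlb
      simpa [nsmul_eq_mul] using this
    have hB1 : ∑ v ∈ R, ((rd v).card : ℝ) ≤ ∑ v, ((rd v).card : ℝ) :=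
      Finset.sum_le_sum_of_subset_of_nonneg (Finset.subset_univ R)
        (by intros; positivity)
    calc (R.card : ℝ) * ((1-ε-ξ)*n) ≤ ∑ v ∈ R, ((rd v).card : ℝ) := hA
      _ ≤ ∑ v, ((rd v).card : ℝ) := hB1
      _ ≤ (1/2 + ν) * n * n := h2gen true
  have h2y : (S.card : ℝ) * ((1 - ε - ξ) * n) ≤ (1/2 + ν) * n * n := by
    have hlb : ∀ v ∈ S, (1 - ε - ξ) * n ≤ ((bd v).card : ℝ) := by
      intro v hv
      simp only [hS, Finset.mem_filter, Finset.mem_univ, true_and] at hv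
      have h1 := hmin' v
      have h2 : ((nd v).card : ℝ) = (rd v).card + (bd v).card := by
        exact_mod_cast congrArg (Nat.cast : ℕ → ℝ) (hsplit v)
      nlinarith [hv.1]
    have hA : (S.card : ℝ) * ((1-ε-ξ)*n) ≤ ∑ v ∈ S, ((bd v).card : ℝ) := by
      have := Finset.card_nsmul_le_sum S (fun v => ((bd v).card : ℝ)) ((1-ε-ξ)*n) hlb
      simpa [nsmul_eq_mul] using this
    have hB1 : ∑ v ∈ S, ((bd v).card : ℝ) ≤ ∑ v, ((bd v).card : ℝ) :=
      Finset.sum_le_sum_of_subset_of_nonneg (Finset.subset_univ S)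
        (by intros; positivity)
    calc (S.card : ℝ) * ((1-ε-ξ)*n) ≤ ∑ v ∈ S, ((bd v).card : ℝ) := hA
      _ ≤ ∑ v, ((bd v).card : ℝ) := hB1
      _ ≤ (1/2 + ν) * n * n := h2gen false
  -- pair counting between R and S
  set P : Finset (Fin n × Fin n) := R ×ˢ S with hP
  set P1 : Finset (Fin n × Fin n) :=
    P.filter (fun p => G.Adj p.1 p.2 ∧ c s(p.1, p.2) = true) with hP1def
  set P2 : Finset (Fin n × Fin n) :=
    P.filter (fun p => G.Adj p.1 p.2 ∧ c s(p.1, p.2) = false) with hP2def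
  set P3 : Finset (Fin n × Fin n) := P.filter (fun p => ¬ G.Adj p.1 p.2) with hP3def
  have hPsub : P ⊆ P1 ∪ P2 ∪ P3 := by
    intro p hp
    simp only [hP1def, hP2def, hP3def, Finset.mem_union, Finset.mem_filter]
    by_cases hadj : G.Adj p.1 p.2
    · cases hcol : c s(p.1, p.2) <;> tauto
    · tauto
  have hPcard : P.card = R.card * S.card := by rw [hP, Finset.card_product]
  have hP1b : (P1.card : ℝ) ≤ (S.card : ℝ) * (ξ * n) := by
    have hfib : P1.card = ∑ v ∈ S, (P1.filter (fun p => p.2 = v)).card := by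
      apply Finset.card_eq_sum_card_fiberwise
      intro p hp
      simp only [Finset.mem_coe, hP1def, hP, Finset.mem_filter, Finset.mem_product] at hp
      exact hp.1.2
    have hfible : ∀ v ∈ S, ((P1.filter (fun p => p.2 = v)).card : ℝ) ≤ ξ * n := by
      intro v hv
      have hsub : (P1.filter (fun p => p.2 = v)).card ≤ (rd v).card := by
        apply Finset.card_le_card_of_injOn Prod.fst
        · intro p hp
          simp only [Finset.mem_coe, hP1def, hP, Finset.mem_filter, Finset.mem_product] at hp
          obtain ⟨⟨⟨hpR, hpS⟩, hadj, hcol⟩, hpv⟩ := hp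
          simp only [Finset.mem_coe, hrd, Finset.mem_filter, Finset.mem_univ, true_and]
          subst hpv
          exact ⟨hadj.symm, by rwa [Sym2.eq_swap]⟩
        · intro p hp q hq hpq
          simp only [Finset.coe_filter, Set.mem_setOf_eq] at hp hq
          exact Prod.ext hpq (hp.2.trans hq.2.symm)
      have hlt : ((rd v).card : ℝ) < ξ * n := by
        simp only [hS, Finset.mem_filter, Finset.mem_univ, true_and] at hv
        exact hv.1
      exact le_trans (by exact_mod_cast hsub) (le_of_lt hlt)
    calc (P1.card : ℝ) = ∑ v ∈ S, ((P1.filter (fun p => p.2 = v)).card : ℝ) := by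
          rw [hfib]; push_cast; ring
      _ ≤ (S.card : ℝ) * (ξ * n) := by
          have := Finset.sum_le_card_nsmul S _ (ξ * n) hfible
          simpa [nsmul_eq_mul] using this
  have hP2b : (P2.card : ℝ) ≤ (R.card : ℝ) * (ξ * n) := by
    have hfib : P2.card = ∑ u ∈ R, (P2.filter (fun p => p.1 = u)).card := by
      apply Finset.card_eq_sum_card_fiberwise
      intro p hp
      simp only [Finset.mem_coe, hP2def, hP, Finset.mem_filter, Finset.mem_product] at hp
      exact hp.1.1
    have hfible : ∀ u ∈ R, ((P2.filter (fun p => p.1 = u)).card : ℝ) ≤ ξ * n := by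
      intro u hu
      have hsub : (P2.filter (fun p => p.1 = u)).card ≤ (bd u).card := by
        apply Finset.card_le_card_of_injOn Prod.snd
        · intro p hp
          simp only [Finset.mem_coe, hP2def, hP, Finset.mem_filter, Finset.mem_product] at hp
          obtain ⟨⟨⟨hpR, hpS⟩, hadj, hcol⟩, hpu⟩ := hp
          simp only [Finset.mem_coe, hbd, Finset.mem_filter, Finset.mem_univ, true_and]
          subst hpu
          exact ⟨hadj, hcol⟩
        · intro p hp q hq hpq
          simp only [Finset.coe_filter, Set.mem_setOf_eq] at hp hq
          exact Prod.ext (hp.2.trans hq.2.symm) hpq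
      have hlt : ((bd u).card : ℝ) < ξ * n := by
        simp only [hR, Finset.mem_filter, Finset.mem_univ, true_and] at hu
        exact hu
      exact le_trans (by exact_mod_cast hsub) (le_of_lt hlt)
    calc (P2.card : ℝ) = ∑ u ∈ R, ((P2.filter (fun p => p.1 = u)).card : ℝ) := by
          rw [hfib]; push_cast; ring
      _ ≤ (R.card : ℝ) * (ξ * n) := by
          have := Finset.sum_le_card_nsmul R _ (ξ * n) hfible
          simpa [nsmul_eq_mul] using this
  have hnonadj : ∀ v : Fin n, ((Finset.univ.filter (fun u => ¬ G.Adj v u)).card : ℝ) ≤ ε * n := by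
    intro v
    have h1 : Finset.univ.filter (fun u => ¬ G.Adj v u) = Finset.univ \ nd v := by
      rw [hnd, Finset.filter_not]
    have h2 : (Finset.univ.filter (fun u => ¬ G.Adj v u)).card = n - (nd v).card := by
      rw [h1, Finset.card_sdiff_of_subset (Finset.subset_univ _)]; simp
    rw [h2, Nat.cast_sub (hndle v)]
    have := hmin' v
    linarith
  have hP3bS : (P3.card : ℝ) ≤ (S.card : ℝ) * (ε * n) := by
    have hfib : P3.card = ∑ v ∈ S, (P3.filter (fun p => p.2 = v)).card := by
      apply Finset.card_eq_sum_card_fiberwise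
      intro p hp
      simp only [Finset.mem_coe, hP3def, hP, Finset.mem_filter, Finset.mem_product] at hp
      exact hp.1.2
    have hfible : ∀ v ∈ S, ((P3.filter (fun p => p.2 = v)).card : ℝ) ≤ ε * n := by
      intro v hv
      have hsub : (P3.filter (fun p => p.2 = v)).card
          ≤ (Finset.univ.filter (fun u => ¬ G.Adj v u)).card := by
        apply Finset.card_le_card_of_injOn Prod.fst
        · intro p hp
          simp only [Finset.mem_coe, hP3def, hP, Finset.mem_filter, Finset.mem_product] at hp
          obtain ⟨⟨⟨hpR, hpS⟩, hadj⟩, hpv⟩ := hp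
          simp only [Finset.mem_coe, Finset.mem_filter, Finset.mem_univ, true_and]
          subst hpv
          exact fun h => hadj h.symm
        · intro p hp q hq hpq
          simp only [Finset.coe_filter, Set.mem_setOf_eq] at hp hq
          exact Prod.ext hpq (hp.2.trans hq.2.symm)
      exact le_trans (by exact_mod_cast hsub) (hnonadj v)
    calc (P3.card : ℝ) = ∑ v ∈ S, ((P3.filter (fun p => p.2 = v)).card : ℝ) := by
          rw [hfib]; push_cast; ring
      _ ≤ (S.card : ℝ) * (ε * n) := by
          have := Finset.sum_le_card_nsmul S _ (ε * n) hfible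
          simpa [nsmul_eq_mul] using this
  have hP3bR : (P3.card : ℝ) ≤ (R.card : ℝ) * (ε * n) := by
    have hfib : P3.card = ∑ u ∈ R, (P3.filter (fun p => p.1 = u)).card := by
      apply Finset.card_eq_sum_card_fiberwise
      intro p hp
      simp only [Finset.mem_coe, hP3def, hP, Finset.mem_filter, Finset.mem_product] at hp
      exact hp.1.1
    have hfible : ∀ u ∈ R, ((P3.filter (fun p => p.1 = u)).card : ℝ) ≤ ε * n := by
      intro u hu
      have hsub : (P3.filter (fun p => p.1 = u)).card
          ≤ (Finset.univ.filter (fun w => ¬ G.Adj u w)).card := by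
        apply Finset.card_le_card_of_injOn Prod.snd
        · intro p hp
          simp only [Finset.mem_coe, hP3def, hP, Finset.mem_filter, Finset.mem_product] at hp
          obtain ⟨⟨⟨hpR, hpS⟩, hadj⟩, hpu⟩ := hp
          simp only [Finset.mem_coe, Finset.mem_filter, Finset.mem_univ, true_and]
          subst hpu
          exact hadj
        · intro p hp q hq hpq
          simp only [Finset.coe_filter, Set.mem_setOf_eq] at hp hq
          exact Prod.ext (hp.2.trans hq.2.symm) hpq
      exact le_trans (by exact_mod_cast hsub) (hnonadj u)
    calc (P3.card : ℝ) = ∑ u ∈ R, ((P3.filter (fun p => p.1 = u)).card : ℝ) := by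
          rw [hfib]; push_cast; ring
      _ ≤ (R.card : ℝ) * (ε * n) := by
          have := Finset.sum_le_card_nsmul R _ (ε * n) hfible
          simpa [nsmul_eq_mul] using this
  have hPle : P.card ≤ P1.card + P2.card + P3.card := by
    calc P.card ≤ (P1 ∪ P2 ∪ P3).card := Finset.card_le_card hPsub
      _ ≤ (P1 ∪ P2).card + P3.card := Finset.card_union_le _ _
      _ ≤ P1.card + P2.card + P3.card := Nat.add_le_add_right (Finset.card_union_le _ _) _
  have hPle' : ((R.card : ℝ) * S.card) ≤ (P1.card : ℝ) + P2.card + P3.card := by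
    have : ((P.card : ℕ) : ℝ) ≤ ((P1.card + P2.card + P3.card : ℕ) : ℝ) := by
      exact_mod_cast hPle
    rw [hPcard] at this
    push_cast at this
    linarith
  -- assemble and conclude
  have h1 : (n : ℝ) - ξ * n < (R.card : ℝ) + S.card := by
    have : (n : ℝ) ≤ (Bf.card : ℝ) + R.card + S.card := by exact_mod_cast hcard_cover
    linarith
  have hxy1 : (R.card : ℝ) + S.card ≤ n := by exact_mod_cast hRScard
  have h3 : (R.card : ℝ) * S.card ≤ ξ * n * ((R.card : ℝ) + S.card) + ε * n * S.card := by
    nlinarith [hPle', hP1b, hP2b, hP3bS]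
  have h3' : (R.card : ℝ) * S.card ≤ ξ * n * ((R.card : ℝ) + S.card) + ε * n * R.card := by
    nlinarith [hPle', hP1b, hP2b, hP3bR]
  exact core14 ε ν ξ (R.card : ℝ) (S.card : ℝ) (n : ℝ) hε hν hξdef hξpos hN
    (Nat.cast_nonneg _) (Nat.cast_nonneg _) hxy1 h1 h2x h2y h3 h3'
end

section
/- In a type-2 copy K of K_{2,2Δ} with parts A = {x, z} and B = {y} ∪ B', suppose a copy H' of a graph H in G uses only the edges from x to {y} ∪ B_1 and from z to B_2 where B_1, B_2 ⊆ B' are disjoint of appropriate sizes (|{y} ∪ B_1| = |B_2|). Then exchanging the images of x and z produces an embedding H'' of H in G with c(H'') - c(H') ∈ {2, -2}. -/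
/-- In a type-2 copy of `K_{2,2Δ}` with parts `{x,z}` and `{y} ∪ B'` (all paths
`xwz`, `w ∈ B'`, coloured identically with colours `p, q`, and
`|c(xy)+c(yz)| ≠ |p+q|`), if a copy `H'` of `H` uses from this gadget only the
edges from `x` to `{y} ∪ B₁` and from `z` to `B₂`, where `B₁, B₂ ⊆ B'` are
disjoint with `|{y} ∪ B₁| = |B₂|`, then exchanging the images of `x` and `z`
changes the colour sum by exactly `+2` or `-2`. -/
theorem stmt17 {V : Type*} [DecidableEq V] (G : SimpleGraph V)
    (c : Sym2 V → ℤ) (x z y : V) (B' B1 B2 : Finset V)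
    (hxz : x ≠ z) (hxB : x ∉ insert y B') (hzB : z ∉ insert y B')
    (hyB' : y ∉ B') (hB1 : B1 ⊆ B') (hB2 : B2 ⊆ B') (hdisj : Disjoint B1 B2)
    (hcard : B1.card + 1 = B2.card)
    (hedge : ∀ w ∈ insert y B', G.Adj x w ∧ G.Adj z w)
    (hval : ∀ w ∈ insert y B',
      (c s(x, w) = 1 ∨ c s(x, w) = -1) ∧ (c s(z, w) = 1 ∨ c s(z, w) = -1))
    (p q : ℤ) (hpq : ∀ w ∈ B', c s(x, w) = p ∧ c s(z, w) = q)
    (htype2 : |c s(x, y) + c s(y, z)| ≠ |p + q|) :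
    (∑ u ∈ insert y B1, (c s(z, u) - c s(x, u))) +
      (∑ u ∈ B2, (c s(x, u) - c s(z, u))) = 2 ∨
    (∑ u ∈ insert y B1, (c s(z, u) - c s(x, u))) +
      (∑ u ∈ B2, (c s(x, u) - c s(z, u))) = -2 := by
  have hyB1 : y ∉ B1 := fun h => hyB' (hB1 h)
  have hB2ne : B2.Nonempty := Finset.card_pos.mp (by omega)
  obtain ⟨w, hw⟩ := hB2ne
  have hwB' : w ∈ B' := hB2 hw
  have hvw := hval w (Finset.mem_insert_of_mem hwB')
  have hpqw := hpq w hwB'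
  have hp : p = 1 ∨ p = -1 := by rw [← hpqw.1]; exact hvw.1
  have hq : q = 1 ∨ q = -1 := by rw [← hpqw.2]; exact hvw.2
  rw [Finset.sum_insert hyB1]
  have h1 : ∑ u ∈ B1, (c s(z, u) - c s(x, u)) = B1.card * (q - p) := by
    rw [Finset.sum_congr rfl (fun u hu => by
      rw [(hpq u (hB1 hu)).1, (hpq u (hB1 hu)).2]), Finset.sum_const,
      nsmul_eq_mul]
  have h2 : ∑ u ∈ B2, (c s(x, u) - c s(z, u)) = B2.card * (p - q) := by
    rw [Finset.sum_congr rfl (fun u hu => by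
      rw [(hpq u (hB2 hu)).1, (hpq u (hB2 hu)).2]), Finset.sum_const,
      nsmul_eq_mul]
  rw [h1, h2]
  have hcard' : (B2.card : ℤ) = (B1.card : ℤ) + 1 := by exact_mod_cast hcard.symm
  rw [hcard']
  have hzy : c s(z, y) = c s(y, z) := by rw [Sym2.eq_swap]
  rw [hzy]
  have hvy := hval y (Finset.mem_insert_self y B')
  have hxy : c s(x, y) = 1 ∨ c s(x, y) = -1 := hvy.1
  have hcyz : c s(y, z) = 1 ∨ c s(y, z) = -1 := by
    have := hvy.2; rwa [Sym2.eq_swap] at this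
  have key : (c s(x, y) + c s(y, z) = 0 ∧ p = q) ∨
      (c s(x, y) = c s(y, z) ∧ p + q = 0) := by
    rcases hxy with h|h <;> rcases hcyz with h'|h' <;> rcases hp with hp|hp <;>
      rcases hq with hq|hq <;> rw [h, h', hp, hq] at htype2 ⊢ <;>
      (revert htype2; norm_num)
  rcases key with ⟨h0, hpq'⟩ | ⟨heq, h0⟩
  · subst hpq'
    rcases hxy with h|h <;> rw [h] at h0 ⊢ <;> [right; left] <;> linarith
  · rw [← heq]
    rcases hp with hp|hp <;> rw [hp] at h0 ⊢ <;> [left; right] <;> linarith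
end

section
/- Let r ≥ 2 and fix an r-colouring of the edges of K_n in which some colour i appears on m_i ≥ (1/r)·C(n,2) edges. If, moreover, there is no 4-cycle in K_n containing exactly two edges of colour i that are opposite to each other and at least one edge of a different colour, then either all edges in colour i form a clique, or all edges in colour i share a common vertex. -/
/-- Let `r ≥ 2` and fix an `r`-colouring of the edges of `K_n` in which colour
`i` appears on at least `C(n,2)/r` edges. If there is no 4-cycle containing two
opposite edges of colour `i` and at least one edge of a different colour, then
either the edges of colour `i` form a clique, or they all share a common
vertex. -/
theorem stmt19 (n r : ℕ) (hr : 2 ≤ r) (col : Sym2 (Fin n) → Fin r) (i : Fin r)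
    (hmi : n.choose 2 ≤ r * {e : Sym2 (Fin n) | ¬e.IsDiag ∧ col e = i}.ncard)
    (hno4 : ¬∃ a b c d : Fin n,
      a ≠ b ∧ b ≠ c ∧ c ≠ d ∧ d ≠ a ∧ a ≠ c ∧ b ≠ d ∧
      col s(a, b) = i ∧ col s(c, d) = i ∧
      (col s(b, c) ≠ i ∨ col s(d, a) ≠ i)) :
    (∀ u v : Fin n, (∃ y, y ≠ u ∧ col s(u, y) = i) →
      (∃ y, y ≠ v ∧ col s(v, y) = i) → u ≠ v → col s(u, v) = i) ∨
    (∃ x : Fin n, ∀ u v : Fin n, u ≠ v → col s(u, v) = i → x = u ∨ x = v) := by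
  have swap : ∀ a b : Fin n, col s(a, b) = col s(b, a) := fun a b => by
    rw [Sym2.eq_swap]
  -- From two disjoint colour-`i` edges `ab`, `cd`, the edge `ac` is also colour `i`.
  have A : ∀ a b c d : Fin n, a ≠ b → c ≠ d → a ≠ c → a ≠ d → b ≠ c → b ≠ d →
      col s(a, b) = i → col s(c, d) = i → col s(a, c) = i := by
    intro a b c d hab hcd hac had hbc hbd h1 h2
    by_contra h
    exact hno4 ⟨b, a, c, d, hab.symm, hac, hcd, hbd.symm, hbc, had,
      (swap b a).trans h1, h2, Or.inl h⟩
  by_cases hcl : ∀ u v : Fin n, (∃ y, y ≠ u ∧ col s(u, y) = i) →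
      (∃ y, y ≠ v ∧ col s(v, y) = i) → u ≠ v → col s(u, v) = i
  · exact Or.inl hcl
  push_neg at hcl
  obtain ⟨u, v, ⟨y, hyu, hyi⟩, ⟨z, hzv, hzi⟩, huv, hne⟩ := hcl
  have hzy : z = y := by
    by_contra hzy
    rcases eq_or_ne z u with h | hzu
    · rw [h] at hzi; exact hne ((swap u v).trans hzi)
    rcases eq_or_ne y v with h | hyv
    · rw [h] at hyi; exact hne hyi
    exact hne (A u y v z hyu.symm hzv.symm huv hzu.symm hyv (Ne.symm hzy) hyi hzi)
  rw [hzy] at hzi hzv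
  -- `y` is the unique colour-`i` neighbour of `u`, and of `v`.
  have hUu : ∀ w, w ≠ u → col s(u, w) = i → w = y := by
    intro w hwu hwi
    by_contra hwy
    rcases eq_or_ne w v with h | hwv
    · rw [h] at hwi; exact hne hwi
    exact hne (A u w v y hwu.symm hzv.symm huv hyu.symm hwv hwy hwi hzi)
  have hUv : ∀ w, w ≠ v → col s(v, w) = i → w = y := by
    intro w hwv hwi
    by_contra hwy
    rcases eq_or_ne w u with h | hwu
    · rw [h] at hwi; exact hne ((swap u v).trans hwi)
    exact hne ((swap u v).trans
      (A v w u y hwv.symm hyu.symm huv.symm hzv.symm hwu hwy hwi hyi))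
  refine Or.inr ⟨y, fun p q hpq hpqi => ?_⟩
  by_contra h
  push_neg at h
  obtain ⟨hyp, hyq⟩ := h
  rcases eq_or_ne p u with h | hpu
  · rw [h] at hpqi hpq; exact hyq (hUu q hpq.symm hpqi).symm
  rcases eq_or_ne q u with h | hqu
  · rw [h] at hpqi hpq; exact hyp (hUu p hpq ((swap u p).trans hpqi)).symm
  rcases eq_or_ne p v with h | hpv
  · rw [h] at hpqi hpq; exact hyq (hUv q hpq.symm hpqi).symm
  rcases eq_or_ne q v with h | hqv
  · rw [h] at hpqi hpq; exact hyp (hUv p hpq ((swap v p).trans hpqi)).symm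
  have := A u y p q hyu.symm hpq hpu.symm hqu.symm hyp hyq hyi hpqi
  exact hyp (hUu p hpu this).symm
end
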